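/- arXiv:1409.6113 — 7 statements merged into one kernel-verified Lean document; each statement's English description precedes it below -/
import Mathlib

section
/- Let f : ℝ → ℝ be C¹ with f(0) = 0. If v : ℝ → ℝ is a positive solution of -v'' = f(v) on ℝ with v(t) → 0 as |t| → ∞, then there exists λ ∈ ℝ such that v is symmetric about λ, i.e. v(2λ - t) = v(t) for all t, and v'(t) > 0 for all t < λ. -/
open Filter Set

/-- Global uniqueness for an autonomous ODE with `C¹` right-hand side, via a
clopen argument from local uniqueness. -/
lemma ode_uniq {E : Type*} [NormedAddCommGroup E] [NormedSpace ℝ E] {G : E → E}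
    (hG : ContDiff ℝ 1 G) {u w : ℝ → E} (hu : ∀ t, HasDerivAt u (G (u t)) t)
    (hw : ∀ t, HasDerivAt w (G (w t)) t) {t₀ : ℝ} (h0 : u t₀ = w t₀) : u = w := by
  have hucont : Continuous u := continuous_iff_continuousAt.mpr fun t => (hu t).continuousAt
  have hwcont : Continuous w := continuous_iff_continuousAt.mpr fun t => (hw t).continuousAt
  have hclopen : IsClopen {t : ℝ | u t = w t} := by
    constructor
    · exact isClosed_eq hucont hwcont
    · rw [isOpen_iff_mem_nhds]
      intro t1 ht1
      have heq : u t1 = w t1 := ht1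
      obtain ⟨K, s, hs, hLip⟩ := (hG.contDiffAt (x := u t1)).exists_lipschitzOnWith
      have hus : ∀ᶠ t in nhds t1, u t ∈ s := hucont.continuousAt.preimage_mem_nhds hs
      have hws : ∀ᶠ t in nhds t1, w t ∈ s := by
        rw [heq] at hs
        exact hwcont.continuousAt.preimage_mem_nhds hs
      have := ODE_solution_unique_of_eventually (v := fun _ => G) (s := fun _ => s) (K := K)
        (Filter.Eventually.of_forall fun _ => hLip)
        (hus.mono fun t ht => ⟨hu t, ht⟩) (hws.mono fun t ht => ⟨hw t, ht⟩) heq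
      exact this.mono fun t ht => ht
  have : {t : ℝ | u t = w t} = univ := hclopen.eq_univ ⟨t₀, h0⟩
  funext t
  exact (eq_univ_iff_forall.mp this) t

/-- A positive decaying solution of `-v'' = f v` is symmetric about some point `λ`,
and strictly increasing to the left of `λ`. -/
theorem stmt_1 (f : ℝ → ℝ) (hf : ContDiff ℝ 1 f) (hf0 : f 0 = 0)
    (v : ℝ → ℝ) (hv : ContDiff ℝ 2 v)
    (hpos : ∀ t, 0 < v t)
    (hode : ∀ t, deriv (deriv v) t = -f (v t))
    (hdecay : Tendsto v (cocompact ℝ) (nhds 0)) :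
    ∃ lam : ℝ, (∀ t, v (2 * lam - t) = v t) ∧ (∀ t < lam, 0 < deriv v t) := by
  -- basic regularity
  have hv2 : ContDiff ℝ (1 + 1) v := by
    have h21 : (2 : WithTop ℕ∞) = 1 + 1 := by norm_num
    rwa [h21] at hv
  rw [contDiff_succ_iff_deriv] at hv2
  have hd1 : Differentiable ℝ v := hv2.1
  have hd2 : ContDiff ℝ 1 (deriv v) := hv2.2.2
  have hd2' : Differentiable ℝ (deriv v) := hd2.differentiable one_ne_zero
  -- the first-order system
  set G : ℝ × ℝ → ℝ × ℝ := fun p => (p.2, -f p.1) with hGdef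
  have hG : ContDiff ℝ 1 G := contDiff_snd.prodMk ((hf.comp contDiff_fst).neg)
  set u : ℝ → ℝ × ℝ := fun t => (v t, deriv v t) with hudef
  have hu : ∀ t, HasDerivAt u (G (u t)) t := by
    intro t
    have h1 : HasDerivAt v (deriv v t) t := (hd1 t).hasDerivAt
    have h2 : HasDerivAt (deriv v) (-f (v t)) t := hode t ▸ (hd2' t).hasDerivAt
    exact h1.prodMk h2
  -- reflection symmetry about any critical point
  have sym : ∀ c : ℝ, deriv v c = 0 →
      ∀ t, v (2 * c - t) = v t ∧ deriv v (2 * c - t) = -deriv v t := by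
    intro c hc t
    set w : ℝ → ℝ × ℝ := fun t => (v (2 * c - t), -deriv v (2 * c - t)) with hwdef
    have hg : ∀ t : ℝ, HasDerivAt (fun t : ℝ => 2 * c - t) (-1) t := by
      intro t
      simpa using (hasDerivAt_id t).const_sub (2 * c)
    have hw : ∀ t, HasDerivAt w (G (w t)) t := by
      intro t
      have h1 : HasDerivAt (fun t : ℝ => v (2 * c - t)) (deriv v (2 * c - t) * (-1)) t :=
        (hd1 (2 * c - t)).hasDerivAt.comp t (hg t)
      have h2 : HasDerivAt (fun t : ℝ => deriv v (2 * c - t))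
          (deriv (deriv v) (2 * c - t) * (-1)) t :=
        (hd2' (2 * c - t)).hasDerivAt.comp t (hg t)
      have h2' := h2.neg
      rw [hode] at h2'
      have h1' : HasDerivAt (fun t : ℝ => v (2 * c - t)) (-deriv v (2 * c - t)) t := by
        simpa [mul_neg_one] using h1
      have h2'' : HasDerivAt (fun t : ℝ => -deriv v (2 * c - t)) (-f (v (2 * c - t))) t := by
        simpa [mul_neg_one, Pi.neg_def] using h2'
      exact h1'.prodMk h2''
    have hcc : u c = w c := by
      simp only [hudef, hwdef]
      rw [show 2 * c - c = c by ring]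
      simp [hc]
    have := ode_uniq hG hu hw hcc
    have ht := congrFun this t
    simp only [hudef, hwdef, Prod.mk.injEq] at ht
    exact ⟨ht.1.symm, by linarith [ht.2]⟩
  -- limits at ±∞
  have hbot : Tendsto v atBot (nhds 0) := by
    refine hdecay.mono_left ?_
    rw [cocompact_eq_atBot_atTop]
    exact le_sup_left
  have htop : Tendsto v atTop (nhds 0) := by
    refine hdecay.mono_left ?_
    rw [cocompact_eq_atBot_atTop]
    exact le_sup_right
  -- any two critical points coincide
  have nocrit : ∀ c c' : ℝ, deriv v c = 0 → deriv v c' = 0 → c = c' := by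
    have key : ∀ c c' : ℝ, c < c' → deriv v c = 0 → deriv v c' = 0 → False := by
      intro c c' hlt hc hc'
      set T : ℝ := 2 * (c' - c) with hT
      have hTpos : 0 < T := by simp [hT]; linarith
      have hper : ∀ t, v (t + T) = v t := by
        intro t
        have h1 := (sym c hc (2 * c' - (t + T))).1
        have h2 := (sym c' hc' (t + T)).1
        have e : 2 * c - (2 * c' - (t + T)) = t := by rw [hT]; ring
        rw [e] at h1
        exact h2.symm.trans h1.symm
      have hseq : ∀ n : ℕ, v ((n : ℝ) * T) = v 0 := by
        intro n
        induction n with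
        | zero => simp
        | succ n ih =>
          have : ((n + 1 : ℕ) : ℝ) * T = (n : ℝ) * T + T := by push_cast; ring
          rw [this, hper, ih]
      have hto : Tendsto (fun n : ℕ => (n : ℝ) * T) atTop atTop :=
        Tendsto.atTop_mul_const hTpos tendsto_natCast_atTop_atTop
      have : Tendsto (fun n : ℕ => v ((n : ℝ) * T)) atTop (nhds 0) := htop.comp hto
      have : Tendsto (fun _ : ℕ => v 0) atTop (nhds 0) := by
        refine this.congr fun n => ?_
        rw [hseq n]
      have h0 : v 0 = 0 := tendsto_nhds_unique tendsto_const_nhds this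
      exact (hpos 0).ne' h0
    intro c c' hc hc'
    rcases lt_trichotomy c c' with h | h | h
    · exact absurd (key c c' h hc hc') (by simp)
    · exact h
    · exact absurd (key c' c h hc' hc) (by simp)
  -- existence of a global maximum point
  obtain ⟨K, hK, hKsub⟩ := mem_cocompact.mp (hdecay (Iio_mem_nhds (hpos 0)))
  obtain ⟨lam, hlamK, hmax⟩ := (hK.insert 0).exists_isMaxOn ⟨0, mem_insert 0 K⟩
    hd1.continuous.continuousOn
  have hglobal : ∀ t, v t ≤ v lam := by
    intro t
    by_cases ht : t ∈ insert 0 K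
    · exact hmax ht
    · have htK : t ∈ Kᶜ := fun h => ht (mem_insert_of_mem 0 h)
      have : v t < v 0 := hKsub htK
      exact this.le.trans (hmax (mem_insert 0 K))
  have hlam0 : deriv v lam = 0 := by
    have : IsLocalMax v lam := Filter.Eventually.of_forall hglobal
    exact this.deriv_eq_zero
  refine ⟨lam, fun t => (sym lam hlam0 t).1, ?_⟩
  -- strict monotonicity to the left of lam
  intro t ht
  by_contra hle
  push_neg at hle
  have hne : deriv v t ≠ 0 := fun h => absurd (nocrit t lam h hlam0) ht.ne
  have hneg : deriv v t < 0 := lt_of_le_of_ne hle hne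
  -- deriv v is nonpositive on Iic t
  have hnonpos : ∀ s ≤ t, deriv v s ≤ 0 := by
    intro s hs
    by_contra hpos'
    push_neg at hpos'
    rcases eq_or_lt_of_le hs with rfl | hslt
    · linarith
    · have hcont : ContinuousOn (deriv v) (Icc s t) := hd2.continuous.continuousOn
      have : (0 : ℝ) ∈ deriv v '' Icc s t := by
        apply intermediate_value_Icc' hs hcont
        constructor <;> [linarith; linarith]
      obtain ⟨x, hx, hx0⟩ := this
      have hxeq : x = lam := nocrit x lam hx0 hlam0
      have hxlt : x < lam := lt_of_le_of_lt hx.2 ht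
      exact absurd hxeq hxlt.ne
  -- hence v is antitone on Iic t, contradicting decay at -∞ and positivity
  have hanti : AntitoneOn v (Iic t) := by
    apply antitoneOn_of_deriv_nonpos (convex_Iic t) hd1.continuous.continuousOn
      (fun x _ => (hd1 x).differentiableWithinAt)
    intro x hx
    rw [interior_Iic] at hx
    exact hnonpos x hx.le
  have hev : ∀ᶠ s in atBot, v t ≤ v s := by
    filter_upwards [eventually_le_atBot t] with s hs
    exact hanti (mem_Iic.mpr hs) (mem_Iic.mpr le_rfl) hs
  have : v t ≤ 0 := ge_of_tendsto hbot hev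
  exact absurd this (not_le.mpr (hpos t))
end

section
/- Let f : ℝ → ℝ be C¹ with f(0) = 0. If v and w are two positive solutions of -u'' = f(u) on ℝ with u(t) → 0 as |t| → ∞, then there exists τ ∈ ℝ such that w(t) = v(t - τ) for all t. That is, the positive decaying solution of the ODE is unique up to translation. -/
open Filter Set Bundle
open scoped Manifold


lemma energy_zero (f : ℝ → ℝ) (hf : ContDiff ℝ 1 f) (hf0 : f 0 = 0)
    (u : ℝ → ℝ) (hu : ContDiff ℝ 2 u) (hupos : ∀ t, 0 < u t)
    (huode : ∀ t, deriv (deriv u) t = -f (u t))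
    (hudecay : Tendsto u (cocompact ℝ) (nhds 0)) :
    ∀ t, (deriv u t)^2/2 + (∫ y in (0:ℝ)..(u t), f y) = 0 := by
  set F : ℝ → ℝ := fun x => ∫ y in (0:ℝ)..x, f y with hFdef
  have hfc : Continuous f := hf.continuous
  have hF : ∀ x, HasDerivAt F (f x) x := fun x =>
    intervalIntegral.integral_hasDerivAt_right (hfc.intervalIntegrable _ _)
      (hfc.stronglyMeasurableAtFilter _ _) hfc.continuousAt
  have hu1 : Differentiable ℝ u := hu.differentiable two_ne_zero
  have hu2 : ContDiff ℝ 1 (deriv u) :=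
    ((contDiff_succ_iff_deriv (n := 1)).mp (by exact_mod_cast hu)).2.2
  have hud : Differentiable ℝ (deriv u) := hu2.differentiable one_ne_zero
  set E : ℝ → ℝ := fun t => (deriv u t)^2/2 + F (u t) with hEdef
  have hE : ∀ t, HasDerivAt E 0 t := by
    intro t
    have h1 : HasDerivAt (fun t => (deriv u t)^2/2)
        ((deriv (deriv u) t * deriv u t + deriv u t * deriv (deriv u) t)/2) t := by
      have := (((hud t).hasDerivAt.mul (hud t).hasDerivAt)).div_const 2
      convert this using 2 with x
      · rfl
      · rfl
      · simp only [Pi.mul_apply]; ring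
    have h2 : HasDerivAt (fun t => F (u t)) (f (u t) * deriv u t) t :=
      (hF (u t)).comp t (hu1 t).hasDerivAt
    have := h1.add h2
    convert this using 1
    · rfl
    · rfl
    · rfl
    · rw [huode]; ring
  have hconst : ∀ t, E t = E 0 :=
    fun t => is_const_of_deriv_eq_zero (fun s => (hE s).differentiableAt)
      (fun s => (hE s).deriv) t 0
  set c : ℝ := E 0 with hc
  clear_value c
  have hcoc : (atBot : Filter ℝ) ⊔ atTop ≤ cocompact ℝ := by
    rw [cocompact_eq_atBot_atTop]
  have htop : Tendsto u atTop (nhds 0) := hudecay.mono_left (le_trans le_sup_right hcoc)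
  have hFc : Continuous F := continuous_iff_continuousAt.mpr fun x => (hF x).continuousAt
  have hF0 : F 0 = 0 := intervalIntegral.integral_same
  have hFlim : Tendsto (fun t => F (u t)) atTop (nhds 0) := by
    have := (hFc.tendsto 0).comp htop
    rwa [hF0] at this
  -- c = 0
  have hc0 : c = 0 := by
    by_contra hne
    -- first show c ≥ 0
    have hsq : ∀ t, (deriv u t)^2/2 = c - F (u t) := by
      intro t
      have := hconst t
      simp only [hEdef] at this
      linarith
    have hcge : 0 ≤ c := by
      have hlim : Tendsto (fun t => c - F (u t)) atTop (nhds c) := by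
        simpa using (tendsto_const_nhds.sub hFlim)
      exact ge_of_tendsto hlim (Eventually.of_forall fun t => by
        rw [← hsq]; positivity)
    have hcpos : 0 < c := lt_of_le_of_ne hcge (Ne.symm hne)
    -- eventually (deriv u t)^2 ≥ c on [T, ∞)
    have hev : ∀ᶠ t in atTop, c ≤ (deriv u t)^2 := by
      have : ∀ᶠ t in atTop, F (u t) < c/2 := hFlim.eventually (eventually_lt_nhds (half_pos hcpos))
      filter_upwards [this] with t ht
      have := hsq t
      nlinarith
    obtain ⟨T, hT⟩ := eventually_atTop.mp hev
    set ε := Real.sqrt c with hε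
    have hεpos : 0 < ε := Real.sqrt_pos.mpr hcpos
    have habs : ∀ t, T ≤ t → ε ≤ |deriv u t| := by
      intro t ht
      rw [hε, show |deriv u t| = Real.sqrt ((deriv u t)^2) by
        rw [Real.sqrt_sq_eq_abs]]
      exact Real.sqrt_le_sqrt (hT t ht)
    have hnz : ∀ t, T ≤ t → deriv u t ≠ 0 := by
      intro t ht h0
      have := habs t ht
      rw [h0, abs_zero] at this
      linarith
    -- sign constancy
    have hsign : (∀ t, T ≤ t → ε ≤ deriv u t) ∨ (∀ t, T ≤ t → deriv u t ≤ -ε) := by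
      rcases lt_or_gt_of_ne (hnz T le_rfl) with hneg | hpos
      · right
        intro t ht
        by_contra hcon
        push_neg at hcon
        have h1 : ε ≤ deriv u t := by
          rcases le_abs.mp (habs t ht) with h | h
          · exact h
          · linarith
        -- deriv u T < 0 < deriv u t, IVT gives a zero
        have hTt : T ≤ t := ht
        have : (0:ℝ) ∈ Icc (deriv u T) (deriv u t) := ⟨le_of_lt hneg, by linarith⟩
        obtain ⟨s, hs, hs0⟩ := intermediate_value_Icc hTt (hud.continuous.continuousOn) this
        exact hnz s hs.1 hs0
      · left
        intro t ht
        by_contra hcon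
        push_neg at hcon
        have h1 : deriv u t ≤ -ε := by
          rcases le_abs.mp (habs t ht) with h | h
          · linarith
          · linarith
        have : (0:ℝ) ∈ Icc (deriv u t) (deriv u T) := ⟨by linarith, le_of_lt hpos⟩
        obtain ⟨s, hs, hs0⟩ := intermediate_value_Icc' ht (hud.continuous.continuousOn) this
        exact hnz s hs.1 hs0
    -- in either case u is unbounded, contradiction with u → 0
    rcases hsign with h | h
    · have hgrow : ∀ t, T ≤ t → ε * (t - T) ≤ u t - u T := fun t ht =>
        (convex_Ici T).mul_sub_le_image_sub_of_le_deriv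
          (hu1.continuous.continuousOn) (hu1.differentiableOn)
          (fun x hx => h x (le_of_lt (by rwa [interior_Ici, mem_Ioi] at hx)))
          T self_mem_Ici t ht ht
      have hlin : Tendsto (fun t => u T + ε * (t - T)) atTop atTop := by
        apply tendsto_atTop_add_const_left
        apply Tendsto.const_mul_atTop hεpos
        exact tendsto_atTop_add_const_right _ _ tendsto_id
      have hutop : Tendsto u atTop atTop := by
        apply tendsto_atTop_mono' atTop _ hlin
        filter_upwards [eventually_ge_atTop T] with t ht
        have := hgrow t ht
        linarith
      exact not_tendsto_nhds_of_tendsto_atTop hutop 0 htop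
    · have hgrow : ∀ t, T ≤ t → u t - u T ≤ (-ε) * (t - T) := fun t ht =>
        (convex_Ici T).image_sub_le_mul_sub_of_deriv_le
          (hu1.continuous.continuousOn) (hu1.differentiableOn)
          (fun x hx => by
            have := h x (le_of_lt (by rwa [interior_Ici, mem_Ioi] at hx))
            linarith)
          T self_mem_Ici t ht ht
      set t₁ := T + (u T + 1)/ε with ht₁
      clear_value t₁
      have hTt₁ : T ≤ t₁ := by
        have : 0 ≤ (u T + 1)/ε := div_nonneg (by linarith [hupos T]) hεpos.le
        linarith
      have := hgrow t₁ hTt₁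
      have hval : (-ε) * (t₁ - T) = -(u T + 1) := by
        rw [ht₁]; field_simp; ring
      rw [hval] at this
      have := hupos t₁
      linarith
  intro t
  have := hconst t
  rw [hc0] at this
  exact this


-- C¹ vector field on a vector space lifts to a C¹ section of the tangent bundle
lemma contMDiff_tangent_lift {E : Type*} [NormedAddCommGroup E] [NormedSpace ℝ E]
    (V : E → E) (hV : ContDiff ℝ 1 V) :
    ContMDiff 𝓘(ℝ, E) 𝓘(ℝ, E).tangent 1
      (fun x ↦ (⟨x, V x⟩ : TangentBundle 𝓘(ℝ, E) E)) := by
  intro x₀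
  rw [Bundle.contMDiffAt_totalSpace]
  refine ⟨contMDiffAt_id, ?_⟩
  have : (fun x => (trivializationAt E (TangentSpace 𝓘(ℝ, E))
      ((⟨x₀, V x₀⟩ : TangentBundle 𝓘(ℝ, E) E)).proj ⟨x, V x⟩).2) = V := by
    funext x
    simp [TangentBundle.trivializationAt_apply, fderivWithin_id uniqueDiffWithinAt_univ]
  rw [this]
  exact (contMDiff_iff_contDiff.mpr hV) x₀

-- integral curve from HasDerivAt
lemma isIntegralCurve_of_hasDerivAt {E : Type*} [NormedAddCommGroup E] [NormedSpace ℝ E]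
    (V : E → E) (γ : ℝ → E) (h : ∀ t, HasDerivAt γ (V (γ t)) t) :
    IsMIntegralCurve (I := 𝓘(ℝ, E)) γ (fun x => V x) := by
  intro t
  have := hasDerivAt_iff_hasFDerivAt.mp (h t)
  exact hasMFDerivAt_iff_hasFDerivAt.mpr this


/-- Uniqueness up to translation of the positive decaying solution to `-u'' = f u`. -/
theorem stmt_3 (f : ℝ → ℝ) (hf : ContDiff ℝ 1 f) (hf0 : f 0 = 0)
    (v w : ℝ → ℝ) (hv : ContDiff ℝ 2 v) (hw : ContDiff ℝ 2 w)
    (hvpos : ∀ t, 0 < v t) (hwpos : ∀ t, 0 < w t)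
    (hvode : ∀ t, deriv (deriv v) t = -f (v t))
    (hwode : ∀ t, deriv (deriv w) t = -f (w t))
    (hvdecay : Tendsto v (cocompact ℝ) (nhds 0))
    (hwdecay : Tendsto w (cocompact ℝ) (nhds 0)) :
    ∃ τ : ℝ, ∀ t, w t = v (t - τ) := by
  have hvE := energy_zero f hf hf0 v hv hvpos hvode hvdecay
  have hwE := energy_zero f hf hf0 w hw hwpos hwode hwdecay
  have hv1 : Differentiable ℝ v := hv.differentiable two_ne_zero
  have hw1 : Differentiable ℝ w := hw.differentiable two_ne_zero
  have hv2 : Differentiable ℝ (deriv v) :=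
    ((contDiff_succ_iff_deriv (n := 1)).mp (by exact_mod_cast hv)).2.2.differentiable one_ne_zero
  have hw2 : Differentiable ℝ (deriv w) :=
    ((contDiff_succ_iff_deriv (n := 1)).mp (by exact_mod_cast hw)).2.2.differentiable one_ne_zero
  -- global maxima of v and w
  obtain ⟨t0, ht0⟩ : ∃ t0, ∀ y, v y ≤ v t0 := by
    apply hv.continuous.exists_forall_ge' 0
    filter_upwards [hvdecay (Iio_mem_nhds (hvpos 0))] with x hx
    exact le_of_lt hx
  obtain ⟨s0, hs0⟩ : ∃ s0, ∀ y, w y ≤ w s0 := by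
    apply hw.continuous.exists_forall_ge' 0
    filter_upwards [hwdecay (Iio_mem_nhds (hwpos 0))] with x hx
    exact le_of_lt hx
  have hdv0 : deriv v t0 = 0 :=
    (IsLocalMax.deriv_eq_zero (Filter.Eventually.of_forall fun y => ht0 y))
  have hdw0 : deriv w s0 = 0 :=
    (IsLocalMax.deriv_eq_zero (Filter.Eventually.of_forall fun y => hs0 y))
  have hFv : (∫ y in (0:ℝ)..(v t0), f y) = 0 := by
    have := hvE t0; rw [hdv0] at this; norm_num at this; exact this
  have hFw : (∫ y in (0:ℝ)..(w s0), f y) = 0 := by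
    have := hwE s0; rw [hdw0] at this; norm_num at this; exact this
  -- common Cauchy data
  have key : ∃ a b, v a = w b ∧ deriv v a = 0 ∧ deriv w b = 0 := by
    rcases le_total (v t0) (w s0) with hle | hle
    · obtain ⟨t1, ht1⟩ : ∃ t1, w t1 < v t0 :=
        (hwdecay.eventually (eventually_lt_nhds (hvpos t0))).exists
      have hmem : v t0 ∈ uIcc (w s0) (w t1) := by
        rw [mem_uIcc]; right; exact ⟨le_of_lt ht1, hle⟩
      obtain ⟨b, _, hb⟩ := intermediate_value_uIcc (hw.continuous.continuousOn) hmem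
      refine ⟨t0, b, hb.symm, hdv0, ?_⟩
      have h1 := hwE b
      rw [hb, hFv] at h1
      have : (deriv w b)^2 = 0 := by linarith
      exact sq_eq_zero_iff.mp this
    · obtain ⟨t1, ht1⟩ : ∃ t1, v t1 < w s0 :=
        (hvdecay.eventually (eventually_lt_nhds (hwpos s0))).exists
      have hmem : w s0 ∈ uIcc (v t0) (v t1) := by
        rw [mem_uIcc]; right; exact ⟨le_of_lt ht1, hle⟩
      obtain ⟨a, _, ha⟩ := intermediate_value_uIcc (hv.continuous.continuousOn) hmem
      refine ⟨a, s0, ha, ?_, hdw0⟩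
      have h1 := hvE a
      rw [ha, hFw] at h1
      have : (deriv v a)^2 = 0 := by linarith
      exact sq_eq_zero_iff.mp this
  obtain ⟨a, b, hab, hda, hdb⟩ := key
  -- first-order system
  set V : ℝ × ℝ → ℝ × ℝ := fun p => (p.2, -f p.1) with hVdef
  have hVc : ContDiff ℝ 1 V := (contDiff_snd).prodMk ((hf.comp contDiff_fst).neg)
  set τ := b - a with hτ
  have hγw : IsMIntegralCurve (I := 𝓘(ℝ, ℝ × ℝ)) (fun t => (w t, deriv w t)) (fun x => V x) := by
    apply isIntegralCurve_of_hasDerivAt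
    intro t
    have h1 : HasDerivAt w (deriv w t) t := (hw1 t).hasDerivAt
    have h2 : HasDerivAt (deriv w) (deriv (deriv w) t) t := (hw2 t).hasDerivAt
    have h3 := h1.prodMk h2
    rw [hwode t] at h3
    exact h3
  have hγv : IsMIntegralCurve (I := 𝓘(ℝ, ℝ × ℝ))
      (fun t => (v (t - τ), deriv v (t - τ))) (fun x => V x) := by
    apply isIntegralCurve_of_hasDerivAt
    intro t
    have hin : HasDerivAt (fun s : ℝ => s - τ) 1 t := by
      simpa using (hasDerivAt_id t).sub_const τ
    have h1 : HasDerivAt (fun s => v (s - τ)) (deriv v (t - τ)) t := by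
      have := (hv1 (t - τ)).hasDerivAt.comp t hin; simp at this; exact this
    have h2 : HasDerivAt (fun s => deriv v (s - τ)) (deriv (deriv v) (t - τ)) t := by
      have := (hv2 (t - τ)).hasDerivAt.comp t hin; simp at this; exact this
    have h3 := h1.prodMk h2
    rw [hvode (t - τ)] at h3
    exact h3
  have heq : (fun t => (w t, deriv w t)) = (fun t => (v (t - τ), deriv v (t - τ))) := by
    apply isMIntegralCurve_Ioo_eq_of_contMDiff_boundaryless (t₀ := b)
      (contMDiff_tangent_lift V hVc) hγw hγv
    show (w b, deriv w b) = (v (b - τ), deriv v (b - τ))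
    have hba : b - τ = a := by rw [hτ]; ring
    rw [hba, hdb, hda, hab]
  exact ⟨τ, fun t => congrArg Prod.fst (congrFun heq t)⟩
end

section
/- Let f : ℝ → ℝ be C¹ with f(t) = 0 for all t ∈ [0, δ) for some δ > 0. Then any nonnegative solution v : ℝ → ℝ of -v'' = f(v) with v(t) → 0 as t → +∞ and t → -∞ is identically zero. -/
open Filter Set

/-- If `f` vanishes on `[0,δ)`, any nonnegative decaying solution of `-v'' = f v`
is identically zero. -/
theorem stmt_4 (f : ℝ → ℝ) (hf : ContDiff ℝ 1 f)
    (δ : ℝ) (hδ : 0 < δ) (hflat : ∀ t ∈ Set.Ico (0:ℝ) δ, f t = 0)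
    (v : ℝ → ℝ) (hv : ContDiff ℝ 2 v)
    (hnonneg : ∀ t, 0 ≤ v t)
    (hode : ∀ t, deriv (deriv v) t = -f (v t))
    (hdecaytop : Tendsto v atTop (nhds 0))
    (hdecaybot : Tendsto v atBot (nhds 0)) :
    ∀ t, v t = 0 := by
  have hfc : Continuous f := hf.continuous
  have hvc : Continuous v := hv.continuous
  have hdv : Differentiable ℝ v := hv.differentiable (by norm_num)
  have hv2 : ContDiff ℝ 1 (deriv v) := by
    have : ContDiff ℝ ((1:ℕ) + 1) v := by exact_mod_cast hv
    exact (contDiff_succ_iff_deriv.mp this).2.2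
  have hdv2 : Differentiable ℝ (deriv v) := hv2.differentiable (by norm_num)
  -- the primitive F of f
  set F : ℝ → ℝ := fun x => ∫ s in (0:ℝ)..x, f s with hFdef
  have hFd : ∀ x, HasDerivAt F (f x) x := by
    intro x
    exact intervalIntegral.integral_hasDerivAt_right
      (hfc.intervalIntegrable 0 x) (hfc.stronglyMeasurableAtFilter _ _) hfc.continuousAt
  have hFcont : Continuous F := by
    rw [continuous_iff_continuousAt]; exact fun x => (hFd x).continuousAt
  have hF0 : ∀ x, 0 ≤ x → x < δ → F x = 0 := by
    intro x hx0 hxδ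
    have : EqOn f (fun _ => (0:ℝ)) (uIcc 0 x) := by
      intro s hs
      rw [uIcc_of_le hx0] at hs
      exact hflat s ⟨hs.1, lt_of_le_of_lt hs.2 hxδ⟩
    simp only [hFdef]
    rw [intervalIntegral.integral_congr this, intervalIntegral.integral_zero]
  -- energy is constant
  set E : ℝ → ℝ := fun t => (deriv v t)^2 + 2 * F (v t) with hEdef
  have hE : ∀ t, HasDerivAt E 0 t := by
    intro t
    have h1 : HasDerivAt (deriv v) (-f (v t)) t := by
      have := (hdv2 t).hasDerivAt
      rwa [hode t] at this
    have h2 : HasDerivAt (fun t => (deriv v t)^2)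
        ((2:ℕ) * (deriv v t)^(2-1) * (-f (v t))) t := h1.pow 2
    have h3 : HasDerivAt (fun t => F (v t)) (f (v t) * deriv v t) t :=
      (hFd (v t)).comp t (hdv t).hasDerivAt
    have h4 := h2.add (h3.const_mul 2)
    have : ((2:ℕ) * (deriv v t)^(2-1) * (-f (v t)) + 2 * (f (v t) * deriv v t)) = 0 := by
      push_cast; ring
    rwa [this] at h4
  have hEconst : ∀ t, E t = E 0 := fun t =>
    is_const_of_deriv_eq_zero (fun s => (hE s).differentiableAt) (fun s => (hE s).deriv) t 0
  set C : ℝ := E 0 with hCdef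
  clear_value C
  -- (deriv v)^2 tends to C at top
  have hFv : Tendsto (fun t => F (v t)) atTop (nhds 0) := by
    have h0 : F 0 = 0 := by simp [hFdef]
    have := (hFcont.continuousAt (x := 0)).tendsto.comp hdecaytop
    rwa [h0] at this
  have hsq : Tendsto (fun t => (deriv v t)^2) atTop (nhds C) := by
    have : (fun t => (deriv v t)^2) = fun t => E t - 2 * F (v t) := by
      funext t; simp only [hEdef]; ring
    rw [this]
    have h1 : Tendsto (fun t => E t) atTop (nhds C) := by
      simp only [hEconst]; exact tendsto_const_nhds
    have := h1.sub (hFv.const_mul 2)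
    simpa using this
  have hCnonneg : 0 ≤ C :=
    le_of_tendsto_of_tendsto tendsto_const_nhds hsq
      (Eventually.of_forall fun t => sq_nonneg _)
  have hC : C = 0 := by
    by_contra hCne
    have hCpos : 0 < C := lt_of_le_of_ne hCnonneg (Ne.symm hCne)
    have h1 : ∀ᶠ t in atTop, v t < 1 := hdecaytop.eventually (gt_mem_nhds one_pos)
    have h2 : ∀ᶠ t in atTop, C/2 < (deriv v t)^2 :=
      hsq.eventually (lt_mem_nhds (half_lt_self hCpos))
    obtain ⟨T, hT⟩ := eventually_atTop.mp (h1.and h2)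
    set s : ℝ := Real.sqrt (C/2) with hsdef
    clear_value s
    have hspos : 0 < s := by rw [hsdef]; exact Real.sqrt_pos.mpr (by linarith)
    have hssq : s^2 = C/2 := by rw [hsdef]; exact Real.sq_sqrt (by linarith)
    set b : ℝ := T + 3/s with hbdef
    clear_value b
    have hTb : T < b := by
      have : 0 < 3/s := by positivity
      rw [hbdef]; linarith
    obtain ⟨c, hc, hceq⟩ := exists_hasDerivAt_eq_slope v (deriv v) hTb
      (hvc.continuousOn) (fun x _ => (hdv x).hasDerivAt)
    have hcT : T ≤ c := le_of_lt hc.1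
    have hCc : C/2 < (deriv v c)^2 := (hT c hcT).2
    have hvb : v b < 1 := (hT b (le_of_lt hTb)).1
    have hvT : v T < 1 := (hT T le_rfl).1
    have hvb0 : 0 ≤ v b := hnonneg b
    have hvT0 : 0 ≤ v T := hnonneg T
    have hbTne : b - T ≠ 0 := by
      have : 0 < b - T := by linarith
      exact ne_of_gt this
    have hslope : deriv v c * (b - T) = v b - v T := by
      rw [hceq, div_mul_cancel₀ _ hbTne]
    have hbT : b - T = 3/s := by rw [hbdef]; ring
    have hsub : (v b - v T)^2 < 4 := by nlinarith
    have h9 : (deriv v c)^2 * (b - T)^2 = (v b - v T)^2 := by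
      rw [← hslope]; ring
    have hsne : s ≠ 0 := ne_of_gt hspos
    have hbT2 : (b - T)^2 * (C/2) = 9 := by
      rw [hbT, ← hssq]; field_simp; ring
    have hbTpos : 0 < (b - T)^2 := by positivity
    nlinarith [mul_lt_mul_of_pos_right hCc hbTpos]
  -- derivative vanishes where v < δ
  have hzero : ∀ t, v t < δ → deriv v t = 0 := by
    intro t ht
    have hE0 : E t = 0 := by rw [hEconst t]; exact hC
    have hFt : F (v t) = 0 := hF0 (v t) (hnonneg t) ht
    have : (deriv v t)^2 = 0 := by
      have := hE0; simp only [hEdef] at this; rw [hFt] at this; linarith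
    exact pow_eq_zero_iff (by norm_num) |>.mp this
  -- a helper: v is constant to the right of any point where deriv v vanishes beyond it
  have hstep : ∀ a : ℝ, (∀ t, a < t → deriv v t = 0) → ∀ x y, a < x → x < y → v y = v x := by
    intro a ha x y hax hxy
    obtain ⟨c, hc, hceq⟩ := exists_hasDerivAt_eq_slope v (deriv v) hxy
      hvc.continuousOn (fun z _ => (hdv z).hasDerivAt)
    have : deriv v c = 0 := ha c (lt_trans hax hc.1)
    rw [this] at hceq
    have hne : y - x ≠ 0 := by linarith [hxy]
    field_simp at hceq
    linarith
  -- v < δ everywhere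
  have hlt : ∀ t, v t < δ := by
    intro t₀
    by_contra hcon
    push_neg at hcon
    set S : Set ℝ := {t | t₀ ≤ t ∧ δ ≤ v t} with hSdef
    have hSne : S.Nonempty := ⟨t₀, le_rfl, hcon⟩
    have hSclosed : IsClosed S := by
      have : S = Ici t₀ ∩ v ⁻¹' (Ici δ) := by ext x; simp [hSdef, and_comm]
      rw [this]
      exact isClosed_Ici.inter (isClosed_Ici.preimage hvc)
    obtain ⟨T, hT⟩ := eventually_atTop.mp (hdecaytop.eventually (gt_mem_nhds hδ))
    have hSbdd : BddAbove S := by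
      refine ⟨T, fun x hx => ?_⟩
      by_contra hxT
      push_neg at hxT
      exact absurd (hT x (le_of_lt hxT)) (not_lt.mpr hx.2)
    set a : ℝ := sSup S with hadef
    clear_value a
    have haS : a ∈ S := by rw [hadef]; exact hSclosed.csSup_mem hSne hSbdd
    have hda : ∀ t, a < t → deriv v t = 0 := by
      intro t hat
      apply hzero
      by_contra hvt
      push_neg at hvt
      have : t ∈ S := ⟨le_trans haS.1 (le_of_lt hat), hvt⟩
      have h5 := le_csSup hSbdd this
      rw [← hadef] at h5
      exact absurd h5 (not_le.mpr hat)
    -- v is constant, = v (a+1), on (a, ∞)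
    have hconst : ∀ t, a < t → v t = v (a+1) := by
      intro t hat
      rcases lt_trichotomy t (a+1) with h | h | h
      · exact (hstep a hda t (a+1) hat h).symm
      · rw [h]
      · exact hstep a hda (a+1) t (by linarith) h
    have hva1 : v (a+1) = 0 := by
      have heq : v =ᶠ[atTop] fun _ => v (a+1) :=
        eventually_atTop.mpr ⟨a+1, fun t ht => hconst t (by linarith)⟩
      have : Tendsto (fun _ : ℝ => v (a+1)) atTop (nhds 0) := hdecaytop.congr' heq
      exact tendsto_nhds_unique tendsto_const_nhds this
    -- v a = 0 by continuity from the right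
    have hva : v a = 0 := by
      have h1 : Tendsto v (nhdsWithin a (Ioi a)) (nhds (v a)) :=
        (hvc.continuousAt (x := a)).continuousWithinAt
      have h2 : Tendsto v (nhdsWithin a (Ioi a)) (nhds 0) := by
        refine Tendsto.congr' ?_ (tendsto_const_nhds (α := ℝ))
        filter_upwards [self_mem_nhdsWithin] with t ht
        rw [hconst t ht, hva1]
      exact tendsto_nhds_unique h1 h2
    have : δ ≤ v a := haS.2
    rw [hva] at this
    linarith
  -- hence deriv v ≡ 0, v is constant, and the constant is 0
  have hdall : ∀ t, deriv v t = 0 := fun t => hzero t (hlt t)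
  have hvconst : ∀ t, v t = v 0 := fun t => is_const_of_deriv_eq_zero hdv hdall t 0
  have hv0 : v 0 = 0 := by
    have heq : v =ᶠ[atTop] fun _ => v 0 := Eventually.of_forall hvconst
    exact tendsto_nhds_unique tendsto_const_nhds (hdecaytop.congr' heq)
  intro t
  rw [hvconst t, hv0]
end

section
/- Let v : ℝ → ℝ be a radial profile solving -v''(r) - ((N-1)/r) v'(r) = f(v(r)) for r > 0, where N ≥ 1 and f(t) = t^p - t with p > 1, F(t) = t^{p+1}/(p+1) - t²/2. Assume v(r), v'(r) → 0 as r → ∞ and v'(0) = 0, v > 0. Then the energy E(r) = ½(v'(r))² + F(v(r)) is strictly decreasing on (0, ∞), E(r) > 0 for all r ≥ 0, and consequently v(0) > ((p+1)/2)^{1/(p-1)}. -/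
open Filter Set

/-- For a positive radial profile of `-Δu = u^p - u`, the energy
`E(r) = ½(v')² + F(v)` is strictly decreasing, positive, and forces
`v(0) > ((p+1)/2)^{1/(p-1)}`. -/
theorem stmt_6 (N : ℕ) (hN : 2 ≤ N) (p : ℝ) (hp : 1 < p)
    (f : ℝ → ℝ) (hfdef : ∀ t, f t = t ^ p - t)
    (F : ℝ → ℝ) (hFdef : ∀ t, F t = t ^ (p + 1) / (p + 1) - t ^ 2 / 2)
    (v : ℝ → ℝ) (hv : ContDiff ℝ 2 v)
    (hpos : ∀ r, 0 ≤ r → 0 < v r)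
    (hode : ∀ r, 0 < r →
      deriv (deriv v) r + ((N - 1 : ℝ) / r) * deriv v r + f (v r) = 0)
    (hv'0 : deriv v 0 = 0)
    (hdecay : Tendsto v atTop (nhds 0))
    (hdecay' : Tendsto (deriv v) atTop (nhds 0))
    (E : ℝ → ℝ) (hEdef : ∀ r, E r = (1/2) * (deriv v r) ^ 2 + F (v r)) :
    StrictAntiOn E (Set.Ioi (0:ℝ)) ∧ (∀ r, 0 ≤ r → 0 < E r) ∧
      v 0 > ((p + 1) / 2) ^ (1 / (p - 1)) := by
  have hp0 : (0:ℝ) < p - 1 := by linarith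
  have hp1 : (0:ℝ) < p + 1 := by linarith
  have hN1 : (1:ℝ) ≤ (N:ℝ) - 1 := by
    have : (2:ℝ) ≤ N := by exact_mod_cast hN
    linarith
  have hFfun : F = fun t : ℝ => t ^ (p+1) / (p+1) - t^2/2 := funext hFdef
  -- smoothness
  have hv1 : Differentiable ℝ v := hv.differentiable (by norm_num)
  have hv2 : Differentiable ℝ (deriv v) := by
    have h2 : ContDiff ℝ (1+1) v := by
      have e : ((1:WithTop ℕ∞) + 1) = 2 := by norm_num
      rw [e]; exact hv
    exact (contDiff_succ_iff_deriv.mp h2).2.2.differentiable (by norm_num)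
  -- derivative of F
  have hF' : ∀ t : ℝ, HasDerivAt F (f t) t := by
    intro t
    have h1 : HasDerivAt (fun x : ℝ => x ^ (p+1)) ((p+1) * t ^ p) t := by
      have h := Real.hasDerivAt_rpow_const (x := t) (p := p + 1)
        (Or.inr (by linarith : (1:ℝ) ≤ p + 1))
      have e : p + 1 - 1 = p := by ring
      rwa [e] at h
    have h2 : HasDerivAt (fun x : ℝ => x ^ 2) (2 * t) t := by
      simpa using hasDerivAt_pow 2 t
    have h3 := (h1.div_const (p+1)).sub (h2.div_const 2)
    rw [hFfun, hfdef]
    exact h3.congr_deriv (by rw [mul_div_cancel_left₀ _ hp1.ne']; ring)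
  -- derivative of E
  have hEfun : E = fun r => (1/2) * (deriv v r)^2 + F (v r) := funext hEdef
  have hE' : ∀ r, HasDerivAt E (deriv v r * deriv (deriv v) r + f (v r) * deriv v r) r := by
    intro r
    have h1 : HasDerivAt (fun s => (deriv v s)^2) (2 * deriv v r * deriv (deriv v) r) r := by
      exact ((hv2 r).hasDerivAt.pow 2).congr_deriv (by norm_num)
    have h2 : HasDerivAt (fun s => F (v s)) (f (v r) * deriv v r) r :=
      (hF' (v r)).comp r (hv1 r).hasDerivAt
    rw [hEfun]
    exact ((h1.const_mul (1/2:ℝ)).add h2).congr_deriv (by ring)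
  have hEderiv : ∀ r, 0 < r → deriv E r = -(((N:ℝ)-1)/r) * (deriv v r)^2 := by
    intro r hr
    rw [(hE' r).deriv, hfdef]
    have ho := hode r hr
    rw [hfdef] at ho
    linear_combination deriv v r * ho
  have hEdiff : Differentiable ℝ E := fun r => (hE' r).differentiableAt
  have hanti : AntitoneOn E (Ici 0) := by
    refine antitoneOn_of_deriv_nonpos (convex_Ici 0) hEdiff.continuous.continuousOn
      (fun x hx => (hEdiff x).differentiableWithinAt) ?_
    intro x hx
    rw [interior_Ici] at hx
    rw [hEderiv x hx]
    have h1 : 0 < ((N:ℝ)-1)/x := div_pos (by linarith) hx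
    nlinarith [sq_nonneg (deriv v x)]
  -- E tends to 0 at infinity
  have hElim : Tendsto E atTop (nhds 0) := by
    have hc : ContinuousAt F 0 := by
      rw [hFfun]
      have c1 : ContinuousAt (fun t : ℝ => t ^ (p+1)) 0 :=
        Real.continuousAt_rpow_const 0 (p+1) (Or.inr (by linarith))
      exact (c1.div_const _).sub ((continuous_pow 2).continuousAt.div_const _)
    have hF0 : F 0 = 0 := by
      rw [hFdef, Real.zero_rpow (by linarith : p + 1 ≠ 0)]
      norm_num
    have hFt : Tendsto (fun r => F (v r)) atTop (nhds 0) := by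
      have h := hc.tendsto.comp hdecay
      rw [hF0] at h
      exact h
    have h1 : Tendsto (fun r => (1/2) * (deriv v r)^2) atTop (nhds 0) := by
      have h := (hdecay'.pow 2).const_mul (1/2:ℝ)
      simpa using h
    have h := h1.add hFt
    rw [hEfun]
    simpa using h
  have hEnn : ∀ r, 0 ≤ r → 0 ≤ E r := by
    intro r hr
    refine le_of_tendsto hElim ?_
    filter_upwards [eventually_ge_atTop r] with s hs
    exact hanti hr (hr.trans hs) hs
  -- if deriv E vanishes at s > 0 then deriv v vanishes
  have hv'eq : ∀ s, 0 < s → deriv E s = 0 → deriv v s = 0 := by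
    intro s hs h0
    have hd := hEderiv s hs
    rw [h0] at hd
    have h1 : ((N:ℝ)-1)/s ≠ 0 := ne_of_gt (div_pos (by linarith) hs)
    have h2 : (deriv v s)^2 = 0 := by
      rcases mul_eq_zero.mp hd.symm with h | h
      · exact absurd (neg_eq_zero.mp h) h1
      · exact h
    exact (pow_eq_zero_iff two_ne_zero).mp h2
  -- positivity of E
  have hEpos : ∀ r, 0 ≤ r → 0 < E r := by
    intro r hr
    rcases (hEnn r hr).lt_or_eq with h | h
    · exact h
    exfalso
    have hEzero : ∀ s, r ≤ s → E s = 0 := fun s hs =>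
      le_antisymm (le_of_le_of_eq (hanti hr (hr.trans hs) hs) h.symm) (hEnn s (hr.trans hs))
    have hvz : ∀ s, r < s → deriv v s = 0 := by
      intro s hs
      apply hv'eq s (lt_of_le_of_lt hr hs)
      have heq : E =ᶠ[nhds s] fun _ => (0:ℝ) := by
        filter_upwards [Ioi_mem_nhds hs] with t ht
        exact hEzero t ht.le
      rw [heq.deriv_eq]
      simp
    have hmono : MonotoneOn v (Ici r) :=
      monotoneOn_of_deriv_nonneg (convex_Ici r) hv1.continuous.continuousOn
        (fun x hx => (hv1 x).differentiableWithinAt)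
        (fun x hx => by rw [interior_Ici] at hx; simp [hvz x hx])
    have hantiv : AntitoneOn v (Ici r) :=
      antitoneOn_of_deriv_nonpos (convex_Ici r) hv1.continuous.continuousOn
        (fun x hx => (hv1 x).differentiableWithinAt)
        (fun x hx => by rw [interior_Ici] at hx; simp [hvz x hx])
    have hconst : ∀ s, r ≤ s → v s = v r := fun s hs =>
      le_antisymm (hantiv self_mem_Ici hs hs) (hmono self_mem_Ici hs hs)
    have hlim2 : Tendsto (fun _ : ℝ => v r) atTop (nhds 0) := by
      refine Tendsto.congr' ?_ hdecay
      filter_upwards [eventually_ge_atTop r] with s hs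
      exact hconst s hs
    have hv0 : v r = 0 := tendsto_nhds_unique tendsto_const_nhds hlim2
    exact (hpos r hr).ne' hv0
  -- strict antitonicity
  have hstrict : StrictAntiOn E (Ioi (0:ℝ)) := by
    intro a ha b hb hab
    simp only [mem_Ioi] at ha hb
    rcases lt_or_ge (E b) (E a) with h | h
    · exact h
    exfalso
    have heq : E b = E a := le_antisymm (hanti ha.le hb.le hab.le) h
    have hconstE : ∀ s, a ≤ s → s ≤ b → E s = E a :=
      fun s h1 h2 => le_antisymm (hanti ha.le (ha.le.trans h1) h1)
        (heq ▸ hanti (ha.le.trans h1) hb.le h2)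
    have h1m : a < (a+b)/2 := by linarith
    have h2m : (a+b)/2 < b := by linarith
    have h0m : (0:ℝ) < (a+b)/2 := by linarith
    have hvz2 : ∀ s, a < s → s < b → deriv v s = 0 := by
      intro s hs1 hs2
      apply hv'eq s (ha.trans hs1)
      have heqE : E =ᶠ[nhds s] fun _ => E a := by
        filter_upwards [Ioo_mem_nhds hs1 hs2] with t ht
        exact hconstE t ht.1.le ht.2.le
      rw [heqE.deriv_eq]
      simp
    have hv'' : deriv (deriv v) ((a+b)/2) = 0 := by
      have heqd : deriv v =ᶠ[nhds ((a+b)/2)] fun _ => (0:ℝ) := by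
        filter_upwards [Ioo_mem_nhds h1m h2m] with t ht
        exact hvz2 t ht.1 ht.2
      rw [heqd.deriv_eq]
      simp
    have ho := hode ((a+b)/2) h0m
    rw [hv'', hvz2 _ h1m h2m, hfdef] at ho
    simp only [mul_zero, zero_add, add_zero] at ho
    have hfm : v ((a+b)/2) ^ p = v ((a+b)/2) := by linarith
    have hvm : 0 < v ((a+b)/2) := hpos _ h0m.le
    have hlog : p * Real.log (v ((a+b)/2)) = Real.log (v ((a+b)/2)) := by
      rw [← Real.log_rpow hvm, hfm]
    have hlz : Real.log (v ((a+b)/2)) = 0 := by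
      have h' : (p - 1) * Real.log (v ((a+b)/2)) = 0 := by linarith
      rcases mul_eq_zero.mp h' with h'' | h''
      · exact absurd h'' (ne_of_gt hp0)
      · exact h''
    have hv1m : v ((a+b)/2) = 1 := by
      rcases Real.log_eq_zero.mp hlz with h'' | h'' | h''
      · exact absurd h'' (ne_of_gt hvm)
      · exact h''
      · linarith
    have hEm := hEdef ((a+b)/2)
    rw [hvz2 _ h1m h2m, hv1m, hFdef, Real.one_rpow] at hEm
    have hEmval : E ((a+b)/2) = 1/(p+1) - 1/2 := by rw [hEm]; ring
    have hlt : (1:ℝ)/(p+1) < 1/2 := by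
      rw [div_lt_div_iff₀ hp1 (by norm_num : (0:ℝ) < 2)]
      linarith
    have hnn := hEnn ((a+b)/2) h0m.le
    linarith [hnn, hEmval]
  refine ⟨hstrict, hEpos, ?_⟩
  -- conclude bound on v 0
  have hE0 := hEpos 0 le_rfl
  rw [hEdef 0, hv'0, hFdef] at hE0
  have hv0 : 0 < v 0 := hpos 0 le_rfl
  have hsplit : v 0 ^ (p+1) = v 0 ^ (p-1) * v 0 ^ (2:ℕ) := by
    rw [← Real.rpow_natCast (v 0) 2, ← Real.rpow_add hv0]
    congr 1
    ring
  rw [hsplit] at hE0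
  norm_num at hE0
  have h2 : 0 < (v 0)^(2:ℕ) := pow_pos hv0 2
  have key : (p+1)/2 < v 0 ^ (p-1) := by
    have h : v 0 ^ (2:ℕ) / 2 < v 0 ^ (p-1) * v 0 ^ (2:ℕ) / (p+1) := by linarith
    rw [div_lt_div_iff₀ (by norm_num : (0:ℝ) < 2) hp1] at h
    rw [div_lt_iff₀ (by norm_num : (0:ℝ) < 2)]
    nlinarith [h, h2]
  have hrw : (v 0 ^ (p-1)) ^ (1/(p-1)) = v 0 := by
    rw [← Real.rpow_mul hv0.le, mul_one_div, div_self (ne_of_gt hp0), Real.rpow_one]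
  have hfin := Real.rpow_lt_rpow (by linarith : (0:ℝ) ≤ (p+1)/2) key
    (by positivity : 0 < 1/(p-1))
  rw [hrw] at hfin
  exact hfin
end

section
/- Let N ≥ 2 and let v : [0,∞) → ℝ be a positive radial solution of -v'' - ((N-1)/r) v' = f(v), v'(0) = 0, with f C¹, f(0)=0, F the primitive of f vanishing at 0. Assume v(r) ≤ C r^{-(N+σ)/2} and |v'(r)| ≤ C r^{-(N+σ)/2} for r ≥ M, for some σ > 0, and F(v(r)) r^N → 0, (v'(r))² r^N → 0 as r → ∞. Then ((N-2)/(2N)) ∫₀^∞ (v')² r^{N-1} dr = ∫₀^∞ F(v) r^{N-1} dr. -/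
open Filter Set MeasureTheory

/-- Pohozaev-type identity for positive radial decaying solutions of
`-v'' - ((N-1)/r) v' = f(v)`. -/
theorem stmt_9 (N : ℕ) (hN : 2 ≤ N)
    (f : ℝ → ℝ) (hf : ContDiff ℝ 1 f) (hf0 : f 0 = 0)
    (F : ℝ → ℝ) (hF : ∀ u, F u = ∫ t in (0:ℝ)..u, f t)
    (v : ℝ → ℝ) (hv : ContDiff ℝ 2 v)
    (hpos : ∀ r, 0 ≤ r → 0 < v r)
    (hode : ∀ r, 0 < r →
      deriv (deriv v) r + ((N - 1 : ℝ) / r) * deriv v r + f (v r) = 0)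
    (hv'0 : deriv v 0 = 0)
    (C M σ : ℝ) (hC : 0 < C) (hM : 0 < M) (hσ : 0 < σ)
    (hbound : ∀ r : ℝ, M ≤ r →
      v r ≤ C * r ^ (-((N + σ) / 2)) ∧ |deriv v r| ≤ C * r ^ (-((N + σ) / 2)))
    (hbdry1 : Tendsto (fun r : ℝ => F (v r) * r ^ (N : ℝ)) atTop (nhds 0))
    (hbdry2 : Tendsto (fun r : ℝ => (deriv v r) ^ 2 * r ^ (N : ℝ)) atTop (nhds 0)) :
    ((N:ℝ) - 2) / (2 * N) * (∫ r in Set.Ioi (0:ℝ), (deriv v r) ^ 2 * r ^ ((N:ℝ) - 1))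
      = ∫ r in Set.Ioi (0:ℝ), F (v r) * r ^ ((N:ℝ) - 1) := by
  have hNR : (2:ℝ) ≤ (N:ℝ) := by exact_mod_cast hN
  have hNpos : (0:ℝ) < N := by linarith
  have hexp1 : (0:ℝ) < (N:ℝ) - 1 := by linarith
  -- regularity facts
  have hv11 : ContDiff ℝ ((1:ℕ) + 1) v := by exact_mod_cast hv
  have hsucc := contDiff_succ_iff_deriv.mp hv11
  have hvdiff : Differentiable ℝ v := hsucc.1
  have hdvC1 : ContDiff ℝ 1 (deriv v) := by exact_mod_cast hsucc.2.2
  have hdv : ∀ r, HasDerivAt v (deriv v r) r := fun r => (hvdiff r).hasDerivAt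
  have hddv : ∀ r, HasDerivAt (deriv v) (deriv (deriv v) r) r := fun r =>
    (hdvC1.differentiable one_ne_zero r).hasDerivAt
  have hdvcont : Continuous (deriv v) := hdvC1.continuous
  -- F is a primitive of f
  have hFd : ∀ u, HasDerivAt F (f u) u := by
    intro u
    have hFe : F = fun u => ∫ t in (0:ℝ)..u, f t := funext hF
    rw [hFe]
    exact intervalIntegral.integral_hasDerivAt_right
      (hf.continuous.intervalIntegrable _ _)
      (hf.continuous.stronglyMeasurable.stronglyMeasurableAtFilter) hf.continuous.continuousAt
  have hFcont : Continuous F :=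
    (Differentiable.continuous (fun u => (hFd u).differentiableAt))
  -- continuity of the power functions
  have hrpowN1 : Continuous (fun r : ℝ => r ^ ((N:ℝ) - 1)) := by
    rw [continuous_iff_continuousAt]
    exact fun x => Real.continuousAt_rpow_const x _ (Or.inr hexp1.le)
  have hrpowN : Continuous (fun r : ℝ => r ^ (N:ℝ)) := by
    rw [continuous_iff_continuousAt]
    exact fun x => Real.continuousAt_rpow_const x _ (Or.inr (by linarith))
  -- names for the two integrands
  set A : ℝ → ℝ := fun r => (deriv v r) ^ 2 * r ^ ((N:ℝ) - 1) with hA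
  set B : ℝ → ℝ := fun r => F (v r) * r ^ ((N:ℝ) - 1) with hB
  have hAcont : Continuous A := (hdvcont.pow 2).mul hrpowN1
  have hBcont : Continuous B := (hFcont.comp hv.continuous).mul hrpowN1
  -- the decay bound at infinity for A
  have hAbd : ∀ r ∈ Ioi M, ‖A r‖ ≤ C ^ 2 * r ^ (-1 - σ) := by
    intro r hr
    have hMr : M ≤ r := le_of_lt hr
    have hrpos : 0 < r := lt_of_lt_of_le hM hMr
    have h2 := (hbound r hMr).2
    have hsq : (deriv v r) ^ 2 ≤ (C * r ^ (-(((N:ℝ) + σ) / 2))) ^ 2 := by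
      have := pow_le_pow_left₀ (abs_nonneg (deriv v r)) h2 2
      simpa [sq_abs] using this
    have hkey : r ^ (-(((N:ℝ) + σ) / 2)) * r ^ (-(((N:ℝ) + σ) / 2)) * r ^ ((N:ℝ) - 1)
        = r ^ (-1 - σ) := by
      rw [← Real.rpow_add hrpos, ← Real.rpow_add hrpos]
      congr 1; ring
    have hAn : ‖A r‖ = A r := by
      have : 0 ≤ A r := mul_nonneg (sq_nonneg _) (Real.rpow_nonneg hrpos.le _)
      exact abs_of_nonneg this
    rw [hAn]
    calc A r ≤ (C * r ^ (-(((N:ℝ) + σ) / 2))) ^ 2 * r ^ ((N:ℝ) - 1) :=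
          mul_le_mul_of_nonneg_right hsq (Real.rpow_nonneg hrpos.le _)
      _ = C ^ 2 * (r ^ (-(((N:ℝ) + σ) / 2)) * r ^ (-(((N:ℝ) + σ) / 2)) * r ^ ((N:ℝ) - 1)) := by
          ring
      _ = C ^ 2 * r ^ (-1 - σ) := by rw [hkey]
  -- quadratic bound for F near zero
  set u₀ : ℝ := C * M ^ (-(((N:ℝ) + σ) / 2)) with hu₀def
  have hu₀ : 0 < u₀ := by positivity
  obtain ⟨K, hK⟩ : ∃ K, ∀ t ∈ Icc (0:ℝ) u₀, ‖deriv f t‖ ≤ K :=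
    isCompact_Icc.exists_bound_of_continuousOn (hf.continuous_deriv le_rfl).continuousOn
  have hK0 : 0 ≤ K := le_trans (norm_nonneg _) (hK 0 ⟨le_rfl, hu₀.le⟩)
  have hfb : ∀ t ∈ Icc (0:ℝ) u₀, |f t| ≤ K * t := by
    intro t ht
    have := norm_image_sub_le_of_norm_deriv_le_segment'
      (f' := deriv f)
      (fun x _ => ((hf.differentiable one_ne_zero) x).hasDerivAt.hasDerivWithinAt)
      (fun x hx => hK x (Ico_subset_Icc_self hx)) t ht
    simpa [hf0] using this
  have hFb : ∀ u ∈ Icc (0:ℝ) u₀, |F u| ≤ K * u ^ 2 := by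
    intro u hu
    rw [hF u]
    have hb : ∀ x ∈ Set.uIoc (0:ℝ) u, ‖f x‖ ≤ K * u := by
      intro x hx
      rw [Set.uIoc_of_le hu.1] at hx
      have hx1 : x ∈ Icc (0:ℝ) u₀ := ⟨hx.1.le, hx.2.trans hu.2⟩
      calc ‖f x‖ ≤ K * x := hfb x hx1
        _ ≤ K * u := mul_le_mul_of_nonneg_left hx.2 hK0
    have := intervalIntegral.norm_integral_le_of_norm_le_const hb
    calc |∫ t in (0:ℝ)..u, f t| ≤ K * u * |u - 0| := this
      _ = K * u ^ 2 := by rw [abs_of_nonneg (by linarith [hu.1] : (0:ℝ) ≤ u - 0)]; ring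
  -- v r lands in [0, u₀] for r ≥ M
  have hvmem : ∀ r, M ≤ r → v r ∈ Icc (0:ℝ) u₀ := by
    intro r hr
    have hrpos : 0 < r := lt_of_lt_of_le hM hr
    refine ⟨(hpos r hrpos.le).le, ?_⟩
    refine ((hbound r hr).1).trans ?_
    rw [hu₀def]
    refine mul_le_mul_of_nonneg_left ?_ hC.le
    refine Real.rpow_le_rpow_of_nonpos hM hr ?_
    have : (0:ℝ) ≤ ((N:ℝ) + σ) / 2 := by positivity
    linarith
  -- the decay bound at infinity for B
  have hBbd : ∀ r ∈ Ioi M, ‖B r‖ ≤ K * C ^ 2 * r ^ (-1 - σ) := by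
    intro r hr
    have hMr : M ≤ r := le_of_lt hr
    have hrpos : 0 < r := lt_of_lt_of_le hM hMr
    have hv2 : (v r) ^ 2 ≤ (C * r ^ (-(((N:ℝ) + σ) / 2))) ^ 2 :=
      pow_le_pow_left₀ (hpos r hrpos.le).le (hbound r hMr).1 2
    have hFv : |F (v r)| ≤ K * (v r) ^ 2 := hFb (v r) (hvmem r hMr)
    have hkey : r ^ (-(((N:ℝ) + σ) / 2)) * r ^ (-(((N:ℝ) + σ) / 2)) * r ^ ((N:ℝ) - 1)
        = r ^ (-1 - σ) := by
      rw [← Real.rpow_add hrpos, ← Real.rpow_add hrpos]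
      congr 1; ring
    have hBabs : ‖B r‖ = |F (v r)| * r ^ ((N:ℝ) - 1) := by
      rw [hB]
      simp [abs_mul, abs_of_nonneg (Real.rpow_nonneg hrpos.le ((N:ℝ) - 1))]
    rw [hBabs]
    calc |F (v r)| * r ^ ((N:ℝ) - 1)
        ≤ (K * (v r) ^ 2) * r ^ ((N:ℝ) - 1) :=
          mul_le_mul_of_nonneg_right hFv (Real.rpow_nonneg hrpos.le _)
      _ ≤ (K * (C * r ^ (-(((N:ℝ) + σ) / 2))) ^ 2) * r ^ ((N:ℝ) - 1) := by
          refine mul_le_mul_of_nonneg_right ?_ (Real.rpow_nonneg hrpos.le _)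
          exact mul_le_mul_of_nonneg_left hv2 hK0
      _ = K * C ^ 2 * (r ^ (-(((N:ℝ) + σ) / 2)) * r ^ (-(((N:ℝ) + σ) / 2)) * r ^ ((N:ℝ) - 1)) := by
          ring
      _ = K * C ^ 2 * r ^ (-1 - σ) := by rw [hkey]
  -- integrability of the model function and of A and B
  have hmodel : IntegrableOn (fun r : ℝ => r ^ (-1 - σ)) (Ioi M) :=
    integrableOn_Ioi_rpow_of_lt (by linarith) hM
  have hInt_of : ∀ (g : ℝ → ℝ) (c : ℝ), Continuous g →
      (∀ r ∈ Ioi M, ‖g r‖ ≤ c * r ^ (-1 - σ)) → IntegrableOn g (Ioi (0:ℝ)) := by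
    intro g c hg hgb
    have h1 : IntegrableOn g (Ioc 0 M) :=
      (hg.integrableOn_Icc (a := 0) (b := M)).mono_set Ioc_subset_Icc_self
    have h2 : IntegrableOn g (Ioi M) := by
      refine Integrable.mono' (g := fun r => c * r ^ (-1 - σ)) (hmodel.const_mul c)
        (hg.aestronglyMeasurable.restrict) ?_
      exact (ae_restrict_iff' measurableSet_Ioi).mpr (ae_of_all _ hgb)
    have : IntegrableOn g (Ioc 0 M ∪ Ioi M) := h1.union h2
    rwa [Ioc_union_Ioi_eq_Ioi hM.le] at this
  have hAint : IntegrableOn A (Ioi (0:ℝ)) := hInt_of A (C ^ 2) hAcont hAbd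
  have hBint : IntegrableOn B (Ioi (0:ℝ)) := hInt_of B (K * C ^ 2) hBcont hBbd
  -- the Pohozaev function G
  set G : ℝ → ℝ := fun r => (1/2) * (deriv v r) ^ 2 * r ^ (N:ℝ) + F (v r) * r ^ (N:ℝ) with hG
  have hGderiv : ∀ r ∈ Ioi (0:ℝ), HasDerivAt G (-(((N:ℝ) - 2) / 2) * A r + (N:ℝ) * B r) r := by
    intro r hr
    have hrpos : (0:ℝ) < r := hr
    have hrne : r ≠ 0 := hrpos.ne'
    have h1 : HasDerivAt (fun s : ℝ => s ^ (N:ℝ)) ((N:ℝ) * r ^ ((N:ℝ) - 1)) r :=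
      Real.hasDerivAt_rpow_const (Or.inl hrne)
    have h2 : HasDerivAt (fun s => (deriv v s) ^ 2)
        (2 * deriv v r * deriv (deriv v) r) r := by
      simpa [mul_comm, mul_assoc, mul_left_comm] using (hddv r).fun_pow 2
    have h3 : HasDerivAt (fun s => F (v s)) (f (v r) * deriv v r) r :=
      (hFd (v r)).comp r (hdv r)
    have h4 : HasDerivAt G
        ((1/2) * (2 * deriv v r * deriv (deriv v) r) * r ^ (N:ℝ)
          + (1/2) * (deriv v r) ^ 2 * ((N:ℝ) * r ^ ((N:ℝ) - 1))
          + (f (v r) * deriv v r * r ^ (N:ℝ) + F (v r) * ((N:ℝ) * r ^ ((N:ℝ) - 1)))) r := by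
      exact (((h2.const_mul (1/2)).mul h1).add (h3.mul h1))
    convert h4 using 1
    have hoder : deriv (deriv v) r = -(((N:ℝ) - 1) / r) * deriv v r - f (v r) := by
      have := hode r hrpos
      linarith
    have hrN : r ^ (N:ℝ) = r ^ ((N:ℝ) - 1) * r := by
      rw [Real.rpow_sub_one hrne]
      field_simp
    rw [hoder, hrN, hA, hB]
    field_simp
    ring
  have hGcont0 : ContinuousWithinAt G (Ici (0:ℝ)) 0 := by
    have hGc : Continuous G :=
      (((continuous_const.mul (hdvcont.pow 2)).mul hrpowN).add
        ((hFcont.comp hv.continuous).mul hrpowN))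
    exact hGc.continuousAt.continuousWithinAt
  have hG0 : G 0 = 0 := by
    rw [hG]
    simp [Real.zero_rpow (by positivity : (N:ℝ) ≠ 0)]
  have hGtop : Tendsto G atTop (nhds 0) := by
    have h := (hbdry2.const_mul (1/2 : ℝ)).add hbdry1
    simp only [mul_zero, add_zero, one_div] at h
    have : G = fun r => (1/2 : ℝ) * ((deriv v r) ^ 2 * r ^ (N:ℝ)) + F (v r) * r ^ (N:ℝ) := by
      funext r; rw [hG]; ring
    rw [this]
    simpa using h
  have hG'int : IntegrableOn (fun r => -(((N:ℝ) - 2) / 2) * A r + (N:ℝ) * B r) (Ioi (0:ℝ)) :=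
    (hAint.const_mul _).add (hBint.const_mul _)
  have hmain := MeasureTheory.integral_Ioi_of_hasDerivAt_of_tendsto hGcont0 hGderiv hG'int hGtop
  rw [hG0, sub_zero] at hmain
  rw [MeasureTheory.integral_add (hAint.const_mul _) (hBint.const_mul _),
    integral_const_mul, integral_const_mul] at hmain
  set IA := ∫ r in Set.Ioi (0:ℝ), A r
  set IB := ∫ r in Set.Ioi (0:ℝ), B r
  have hNne : (N:ℝ) ≠ 0 := ne_of_gt hNpos
  field_simp
  linarith [hmain]
end

section
/- Write x = (y, z) ∈ ℝ^M × ℝ^{N-M} with N - M ≥ 3. Let u ∈ C²(ℝ^N) be a positive bounded function with -Δu ≤ 0 on {|z| ≥ r} for some r > 0, and with u(y,z) → 0 as |z| → ∞ uniformly in y. Then there exist C, R > 0 such that u(x) ≤ C |z|^{2-(N-M)} for all x with |z| ≥ R. -/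
open Filter Set

/-- Second directional derivative of `u` at `x` in direction `e`. -/
noncomputable def dir2 {E : Type*} [NormedAddCommGroup E] [NormedSpace ℝ E]
    (u : E → ℝ) (e : E) (x : E) : ℝ :=
  deriv (deriv (fun s : ℝ => u (x + s • e))) 0

/-- Laplacian on a product `ℝ^M × ℝ^K`, as the sum of second derivatives in
the coordinate directions. -/
noncomputable def lapProd {M K : ℕ}
    (u : EuclideanSpace ℝ (Fin M) × EuclideanSpace ℝ (Fin K) → ℝ)
    (x : EuclideanSpace ℝ (Fin M) × EuclideanSpace ℝ (Fin K)) : ℝ :=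
  (∑ i : Fin M, dir2 u (EuclideanSpace.single i 1, 0) x) +
    ∑ j : Fin K, dir2 u (0, EuclideanSpace.single j 1) x

lemma dd_eq {f f' : ℝ → ℝ} {d : ℝ}
    (hf : ∀ᶠ s in nhds (0:ℝ), HasDerivAt f (f' s) s)
    (hf' : HasDerivAt f' d 0) :
    deriv (deriv f) 0 = d := by
  have h1 : deriv f =ᶠ[nhds (0:ℝ)] f' := hf.mono fun s hs => hs.deriv
  rw [h1.deriv_eq, hf'.deriv]

lemma dd_nonpos_of_localMax {f f' : ℝ → ℝ} {d : ℝ}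
    (hf : ∀ᶠ s in nhds (0:ℝ), HasDerivAt f (f' s) s)
    (hf' : HasDerivAt f' d 0)
    (hmax : IsLocalMax f 0) : d ≤ 0 := by
  by_contra hd
  push_neg at hd
  have h0 : f' 0 = 0 := by
    have h := hmax.deriv_eq_zero
    rwa [hf.self_of_nhds.deriv] at h
  -- eventually f' s / s > 0 near 0, s ≠ 0
  have hslope : Tendsto (slope f' 0) (nhdsWithin (0:ℝ) {(0:ℝ)}ᶜ) (nhds d) :=
    hasDerivAt_iff_tendsto_slope.mp hf'
  have hpos : ∀ᶠ s in nhdsWithin (0:ℝ) {(0:ℝ)}ᶜ, 0 < slope f' 0 s :=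
    hslope.eventually (eventually_gt_nhds hd)
  rw [eventually_nhdsWithin_iff] at hpos
  obtain ⟨δ₁, hδ₁, hball₁⟩ := Metric.eventually_nhds_iff.mp hpos
  obtain ⟨δ₂, hδ₂, hball₂⟩ := Metric.eventually_nhds_iff.mp hf
  obtain ⟨δ₃, hδ₃, hball₃⟩ := Metric.eventually_nhds_iff.mp hmax
  set δ : ℝ := min δ₁ (min δ₂ δ₃) with hδdef
  have hδ : 0 < δ := lt_min hδ₁ (lt_min hδ₂ hδ₃)
  have hIcc : Icc (0:ℝ) (δ/2) ⊆ Metric.ball (0:ℝ) δ := by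
    intro s hs
    simp only [Metric.mem_ball, Real.dist_eq, sub_zero]
    rw [abs_of_nonneg hs.1]
    linarith [hs.2]
  have hmono : StrictMonoOn f (Icc (0:ℝ) (δ/2)) := by
    apply strictMonoOn_of_deriv_pos (convex_Icc _ _)
    · intro s hs
      exact (hball₂ (hIcc hs |>.trans_le (min_le_right δ₁ _ |>.trans (min_le_left δ₂ δ₃))
        |> fun h => h) |>.continuousAt.continuousWithinAt)
    · intro s hs
      rw [interior_Icc] at hs
      have hsδ : s ∈ Metric.ball (0:ℝ) δ := hIcc ⟨hs.1.le, hs.2.le⟩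
      have hne : s ≠ 0 := ne_of_gt hs.1
      have hsl : 0 < slope f' 0 s := hball₁ (Metric.ball_subset_ball (min_le_left _ _) hsδ) hne
      have : 0 < f' s := by
        have h2 := hsl
        rw [slope_def_field, h0, sub_zero, sub_zero] at h2
        have h3 := mul_pos h2 hs.1
        rwa [div_mul_cancel₀ _ (ne_of_gt hs.1)] at h3
      rw [(hball₂ (Metric.ball_subset_ball ((min_le_right δ₁ _).trans (min_le_left δ₂ δ₃)) hsδ)).deriv]
      exact this
  have hlt : f 0 < f (δ/2) :=
    hmono (left_mem_Icc.mpr (by linarith)) (right_mem_Icc.mpr (by linarith)) (by linarith)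
  have hle : f (δ/2) ≤ f 0 := by
    apply hball₃
    simp only [Real.dist_eq, sub_zero]
    rw [abs_of_nonneg (by linarith)]
    have : δ ≤ δ₃ := (min_le_right δ₁ _).trans (min_le_right δ₂ δ₃)
    linarith
  linarith

noncomputable def Fq (q c b : ℝ) : ℝ → ℝ := fun s => (c + b*s + s^2) ^ q

noncomputable def Fq' (q c b : ℝ) : ℝ → ℝ :=
  fun s => (b + 2*s) * q * (c + b*s + s^2) ^ (q-1)

lemma hasDerivAt_quad (c b : ℝ) (s : ℝ) :
    HasDerivAt (fun s : ℝ => c + b*s + s^2) (b + 2*s) s := by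
  have h1 : HasDerivAt (fun s : ℝ => c + b*s + s^2) (0 + b*1 + 2*s^(2-1)) s :=
    ((hasDerivAt_const s c).add ((hasDerivAt_id s).const_mul b)).add (hasDerivAt_pow 2 s)
  simpa using h1

lemma hasDerivAt_Fq {q c b : ℝ} {s : ℝ} (h : 0 < c + b*s + s^2) :
    HasDerivAt (Fq q c b) (Fq' q c b s) s :=
  (hasDerivAt_quad c b s).rpow_const (Or.inl h.ne')

lemma eventually_quad_pos {c b : ℝ} (hc : 0 < c) :
    ∀ᶠ s in nhds (0:ℝ), 0 < c + b*s + s^2 := by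
  have hcont : Continuous (fun s : ℝ => c + b*s + s^2) := by continuity
  have h0 : (0:ℝ) < c + b*0 + 0^2 := by simpa using hc
  exact (hcont.tendsto 0).eventually (eventually_gt_nhds (by simpa using h0))

lemma eventually_hasDerivAt_Fq {q c b : ℝ} (hc : 0 < c) :
    ∀ᶠ s in nhds (0:ℝ), HasDerivAt (Fq q c b) (Fq' q c b s) s :=
  (eventually_quad_pos hc).mono fun _ h => hasDerivAt_Fq h

lemma hasDerivAt_Fq' {q c b : ℝ} (hc : 0 < c) :
    HasDerivAt (Fq' q c b) (2*q*c^(q-1) + q*(q-1)*c^(q-2)*b^2) 0 := by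
  have h1 : HasDerivAt (fun s : ℝ => (b + 2*s) * q) (2*q) 0 := by
    simpa using ((hasDerivAt_const (0:ℝ) b).add ((hasDerivAt_id (0:ℝ)).const_mul 2)).mul_const q
  have h2 : HasDerivAt (fun s : ℝ => (c + b*s + s^2) ^ (q-1))
      ((b + 2*0) * (q-1) * (c + b*0 + 0^2) ^ (q-1-1)) 0 :=
    (hasDerivAt_quad c b 0).rpow_const (Or.inl (by simpa using hc.ne'))
  have h3 := h1.mul h2
  have e0 : c + b*0 + 0^2 = c := by ring
  rw [e0] at h3
  refine h3.congr_deriv ?_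
  have : q - 1 - 1 = q - 2 := by ring
  rw [this]
  ring

lemma norm_sq_add_smul_single {n : ℕ} (z : EuclideanSpace ℝ (Fin n)) (j : Fin n) (s : ℝ) :
    ‖z + s • EuclideanSpace.single j (1:ℝ)‖^2 = ‖z‖^2 + (2 * z j) * s + s^2 := by
  have h := norm_add_sq_real z (s • EuclideanSpace.single j (1:ℝ))
  rw [h, real_inner_smul_right]
  have h1 : (inner ℝ z (EuclideanSpace.single j (1:ℝ)) : ℝ) = z j := by
    rw [EuclideanSpace.inner_single_right]; simp
  rw [h1, norm_smul]
  simp [mul_pow]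
  ring

lemma norm_sq_sum {n : ℕ} (z : EuclideanSpace ℝ (Fin n)) :
    ∑ j : Fin n, (z j)^2 = ‖z‖^2 := by
  have h := real_inner_self_eq_norm_sq z
  rw [← h, PiLp.inner_apply]
  simp [RCLike.inner_apply, sq]

lemma u_package {M K : ℕ}
    {u : EuclideanSpace ℝ (Fin M) × EuclideanSpace ℝ (Fin K) → ℝ}
    (hu : ContDiff ℝ 2 u)
    (x e : EuclideanSpace ℝ (Fin M) × EuclideanSpace ℝ (Fin K)) :
    (∀ s : ℝ, HasDerivAt (fun t : ℝ => u (x + t • e)) (deriv (fun t : ℝ => u (x + t • e)) s) s) ∧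
      HasDerivAt (deriv (fun t : ℝ => u (x + t • e))) (dir2 u e x) 0 := by
  have hι : ContDiff ℝ 2 (fun s : ℝ => x + s • e) :=
    contDiff_const.add (contDiff_id.smul contDiff_const)
  have hU : ContDiff ℝ 2 (fun s : ℝ => u (x + s • e)) := hu.comp hι
  have h2 : (2 : WithTop ℕ∞) = 1 + 1 := by norm_num
  rw [h2, contDiff_succ_iff_deriv] at hU
  obtain ⟨hdiff, -, hU1⟩ := hU
  refine ⟨fun s => (hdiff s).hasDerivAt, ?_⟩
  exact (hU1.differentiable one_ne_zero 0).hasDerivAt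

noncomputable def wfun {M K : ℕ} (q lam sig eps eta : ℝ)
    (u : EuclideanSpace ℝ (Fin M) × EuclideanSpace ℝ (Fin K) → ℝ) :
    EuclideanSpace ℝ (Fin M) × EuclideanSpace ℝ (Fin K) → ℝ :=
  fun p => u p - lam * ((‖p.2‖^2 : ℝ) ^ q) - sig - eps * ‖p.1‖^2 + eta * ‖p.2‖^2

lemma pack_z {M K : ℕ} {u : EuclideanSpace ℝ (Fin M) × EuclideanSpace ℝ (Fin K) → ℝ}
    (hu : ContDiff ℝ 2 u) (q lam sig eps eta : ℝ)
    (x : EuclideanSpace ℝ (Fin M) × EuclideanSpace ℝ (Fin K)) (hx : x.2 ≠ 0) (j : Fin K) :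
    ∃ W' : ℝ → ℝ,
      (∀ᶠ s in nhds (0:ℝ), HasDerivAt
        (fun s : ℝ => wfun q lam sig eps eta u (x + s • ((0:EuclideanSpace ℝ (Fin M)), EuclideanSpace.single j (1:ℝ)))) (W' s) s) ∧
      HasDerivAt W' (dir2 u ((0:EuclideanSpace ℝ (Fin M)), EuclideanSpace.single j (1:ℝ)) x
        - lam * (2*q*(‖x.2‖^2)^(q-1) + q*(q-1)*(‖x.2‖^2)^(q-2)*(2 * x.2 j)^2) + eta * 2) 0 := by
  set e : EuclideanSpace ℝ (Fin M) × EuclideanSpace ℝ (Fin K) :=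
    ((0:EuclideanSpace ℝ (Fin M)), EuclideanSpace.single j (1:ℝ)) with he
  set c : ℝ := ‖x.2‖^2 with hcdef
  set b : ℝ := 2 * x.2 j with hbdef
  have hc : 0 < c := by
    have : 0 < ‖x.2‖ := norm_pos_iff.mpr hx
    positivity
  obtain ⟨hU1, hU2⟩ := u_package hu x e
  have hrestr : ∀ s : ℝ,
      wfun q lam sig eps eta u (x + s • e)
        = u (x + s • e) - lam * Fq q c b s - sig - eps * ‖x.1‖^2 + eta * (c + b*s + s^2) := by
    intro s
    have h1 : (x + s • e).1 = x.1 := by simp [he]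
    have h2 : (x + s • e).2 = x.2 + s • EuclideanSpace.single j (1:ℝ) := by simp [he]
    have h3 : ‖(x + s • e).2‖^2 = c + b*s + s^2 := by
      rw [h2, norm_sq_add_smul_single]
    simp only [wfun, h1, h3, Fq]
  refine ⟨fun s => deriv (fun t : ℝ => u (x + t • e)) s - lam * Fq' q c b s + eta * (b + 2*s),
    ?_, ?_⟩
  · filter_upwards [eventually_quad_pos (b := b) hc] with s hs
    have hcomb := (((hU1 s).sub ((hasDerivAt_Fq (q := q) hs).const_mul lam)).sub_const sig).sub_const
      (eps * ‖x.1‖^2) |>.add ((hasDerivAt_quad c b s).const_mul eta)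
    have : (fun s : ℝ => wfun q lam sig eps eta u (x + s • e))
        = fun s : ℝ => u (x + s • e) - lam * Fq q c b s - sig - eps * ‖x.1‖^2
            + eta * (c + b*s + s^2) := funext hrestr
    rw [this]
    exact hcomb
  · have hcomb := hU2.sub ((hasDerivAt_Fq' (q := q) (b := b) hc).const_mul lam) |>.add
      ((((hasDerivAt_const (0:ℝ) b).add ((hasDerivAt_id (0:ℝ)).const_mul 2)).const_mul eta))
    simp only [mul_one, add_zero] at hcomb
    refine hcomb.congr_deriv ?_
    ring

lemma pack_y {M K : ℕ} {u : EuclideanSpace ℝ (Fin M) × EuclideanSpace ℝ (Fin K) → ℝ}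
    (hu : ContDiff ℝ 2 u) (q lam sig eps eta : ℝ)
    (x : EuclideanSpace ℝ (Fin M) × EuclideanSpace ℝ (Fin K)) (i : Fin M) :
    ∃ W' : ℝ → ℝ,
      (∀ᶠ s in nhds (0:ℝ), HasDerivAt
        (fun s : ℝ => wfun q lam sig eps eta u (x + s • (EuclideanSpace.single i (1:ℝ), (0:EuclideanSpace ℝ (Fin K))))) (W' s) s) ∧
      HasDerivAt W' (dir2 u (EuclideanSpace.single i (1:ℝ), (0:EuclideanSpace ℝ (Fin K))) x
        - eps * 2) 0 := by
  set e : EuclideanSpace ℝ (Fin M) × EuclideanSpace ℝ (Fin K) :=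
    (EuclideanSpace.single i (1:ℝ), (0:EuclideanSpace ℝ (Fin K))) with he
  set c1 : ℝ := ‖x.1‖^2 with hc1def
  set b1 : ℝ := 2 * x.1 i with hb1def
  obtain ⟨hU1, hU2⟩ := u_package hu x e
  have hrestr : ∀ s : ℝ,
      wfun q lam sig eps eta u (x + s • e)
        = u (x + s • e) - lam * ((‖x.2‖^2 : ℝ) ^ q) - sig - eps * (c1 + b1*s + s^2)
            + eta * ‖x.2‖^2 := by
    intro s
    have h1 : (x + s • e).1 = x.1 + s • EuclideanSpace.single i (1:ℝ) := by simp [he]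
    have h2 : (x + s • e).2 = x.2 := by simp [he]
    have h3 : ‖(x + s • e).1‖^2 = c1 + b1*s + s^2 := by
      rw [h1, norm_sq_add_smul_single]
    simp only [wfun, h2, h3]
  refine ⟨fun s => deriv (fun t : ℝ => u (x + t • e)) s - eps * (b1 + 2*s), ?_, ?_⟩
  · filter_upwards with s
    have hcomb := (((hU1 s).sub_const (lam * ((‖x.2‖^2 : ℝ) ^ q))).sub_const sig).sub
      ((hasDerivAt_quad c1 b1 s).const_mul eps) |>.add_const (eta * ‖x.2‖^2)
    have : (fun s : ℝ => wfun q lam sig eps eta u (x + s • e))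
        = fun s : ℝ => u (x + s • e) - lam * ((‖x.2‖^2 : ℝ) ^ q) - sig - eps * (c1 + b1*s + s^2)
            + eta * ‖x.2‖^2 := funext hrestr
    rw [this]
    exact hcomb
  · have hcomb := hU2.sub
      ((((hasDerivAt_const (0:ℝ) b1).add ((hasDerivAt_id (0:ℝ)).const_mul 2)).const_mul eps))
    refine hcomb.congr_deriv ?_
    simp

lemma localMax_comp_line {M K : ℕ} {w : EuclideanSpace ℝ (Fin M) × EuclideanSpace ℝ (Fin K) → ℝ}
    {x : EuclideanSpace ℝ (Fin M) × EuclideanSpace ℝ (Fin K)} (hmax : IsLocalMax w x)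
    (e : EuclideanSpace ℝ (Fin M) × EuclideanSpace ℝ (Fin K)) :
    IsLocalMax (fun s : ℝ => w (x + s • e)) 0 := by
  have hcont : Filter.Tendsto (fun s : ℝ => x + s • e) (nhds 0) (nhds x) := by
    have hc : Continuous (fun s : ℝ => x + s • e) := by fun_prop
    have h := hc.tendsto (0:ℝ)
    simpa using h
  have h0 : x + (0:ℝ) • e = x := by simp
  have hev := hcont.eventually hmax
  unfold IsLocalMax IsMaxFilter
  simpa [h0] using hev

lemma sum_d2_z {K : ℕ} (q : ℝ) (z : EuclideanSpace ℝ (Fin K)) (hz : z ≠ 0) :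
    ∑ j : Fin K, (2*q*(‖z‖^2 : ℝ)^(q-1) + q*(q-1)*(‖z‖^2 : ℝ)^(q-2)*(2 * z j)^2)
      = (2*K*q + 4*q*(q-1)) * (‖z‖^2 : ℝ)^(q-1) := by
  have hc : (0:ℝ) < ‖z‖^2 := by
    have : 0 < ‖z‖ := norm_pos_iff.mpr hz
    positivity
  rw [Finset.sum_add_distrib, Finset.sum_const, Finset.card_univ, Fintype.card_fin]
  have h1 : ∑ j : Fin K, q*(q-1)*(‖z‖^2 : ℝ)^(q-2)*(2 * z j)^2
      = q*(q-1)*(‖z‖^2 : ℝ)^(q-2) * (4 * ‖z‖^2) := by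
    rw [← Finset.mul_sum]
    congr 1
    rw [← norm_sq_sum z, Finset.mul_sum]
    congr 1; funext j; ring
  rw [h1]
  have h2 : (‖z‖^2 : ℝ)^(q-2) * (‖z‖^2 : ℝ) = (‖z‖^2 : ℝ)^(q-1) := by
    nth_rewrite 2 [← Real.rpow_one (‖z‖^2 : ℝ)]
    rw [← Real.rpow_add hc]
    ring_nf
  have h3 : (‖z‖^2 : ℝ)^(q-2) * (4 * ‖z‖^2) = 4 * (‖z‖^2 : ℝ)^(q-1) := by
    rw [← h2]; ring
  have h4 : q*(q-1)*(‖z‖^2 : ℝ)^(q-2) * (4 * ‖z‖^2) = q*(q-1)*((‖z‖^2 : ℝ)^(q-2)*(4*‖z‖^2)) := by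
    ring
  rw [h4, h3, nsmul_eq_mul]
  ring

lemma interior_ineq {M K : ℕ} {u : EuclideanSpace ℝ (Fin M) × EuclideanSpace ℝ (Fin K) → ℝ}
    (hu : ContDiff ℝ 2 u) (q lam sig eps eta : ℝ)
    (x : EuclideanSpace ℝ (Fin M) × EuclideanSpace ℝ (Fin K)) (hx : x.2 ≠ 0)
    (hq : 2*K*q + 4*q*(q-1) = 0)
    (hmax : IsLocalMax (wfun q lam sig eps eta u) x) :
    lapProd u x + eta * 2 * K - eps * 2 * M ≤ 0 := by
  have hy : ∀ i : Fin M,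
      dir2 u (EuclideanSpace.single i (1:ℝ), (0:EuclideanSpace ℝ (Fin K))) x - eps * 2 ≤ 0 := by
    intro i
    obtain ⟨W', h1, h2⟩ := pack_y hu q lam sig eps eta x i
    exact dd_nonpos_of_localMax h1 h2 (localMax_comp_line hmax _)
  have hz : ∀ j : Fin K,
      dir2 u ((0:EuclideanSpace ℝ (Fin M)), EuclideanSpace.single j (1:ℝ)) x
        - lam * (2*q*(‖x.2‖^2 : ℝ)^(q-1) + q*(q-1)*(‖x.2‖^2 : ℝ)^(q-2)*(2 * x.2 j)^2)
        + eta * 2 ≤ 0 := by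
    intro j
    obtain ⟨W', h1, h2⟩ := pack_z hu q lam sig eps eta x hx j
    exact dd_nonpos_of_localMax h1 h2 (localMax_comp_line hmax _)
  have hsy : (∑ i : Fin M, (dir2 u (EuclideanSpace.single i (1:ℝ), (0:EuclideanSpace ℝ (Fin K))) x
      - eps * 2)) ≤ 0 :=
    Finset.sum_nonpos (fun i _ => hy i)
  have hsz : (∑ j : Fin K, (dir2 u ((0:EuclideanSpace ℝ (Fin M)), EuclideanSpace.single j (1:ℝ)) x
      - lam * (2*q*(‖x.2‖^2 : ℝ)^(q-1) + q*(q-1)*(‖x.2‖^2 : ℝ)^(q-2)*(2 * x.2 j)^2)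
      + eta * 2)) ≤ 0 :=
    Finset.sum_nonpos (fun j _ => hz j)
  have e1 : (∑ i : Fin M, (dir2 u (EuclideanSpace.single i (1:ℝ), (0:EuclideanSpace ℝ (Fin K))) x
      - eps * 2))
      = (∑ i : Fin M, dir2 u (EuclideanSpace.single i (1:ℝ), (0:EuclideanSpace ℝ (Fin K))) x)
        - M * (eps * 2) := by
    rw [Finset.sum_sub_distrib, Finset.sum_const, Finset.card_univ, Fintype.card_fin,
      nsmul_eq_mul]
  have e2 : (∑ j : Fin K, (dir2 u ((0:EuclideanSpace ℝ (Fin M)), EuclideanSpace.single j (1:ℝ)) x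
      - lam * (2*q*(‖x.2‖^2 : ℝ)^(q-1) + q*(q-1)*(‖x.2‖^2 : ℝ)^(q-2)*(2 * x.2 j)^2)
      + eta * 2))
      = (∑ j : Fin K, dir2 u ((0:EuclideanSpace ℝ (Fin M)), EuclideanSpace.single j (1:ℝ)) x)
        - lam * ((2*K*q + 4*q*(q-1)) * (‖x.2‖^2 : ℝ)^(q-1)) + K * (eta * 2) := by
    rw [Finset.sum_add_distrib, Finset.sum_sub_distrib, Finset.sum_const, Finset.card_univ,
      Fintype.card_fin, nsmul_eq_mul, ← Finset.mul_sum, sum_d2_z q x.2 hx]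
  rw [e1] at hsy
  rw [e2, hq, zero_mul, mul_zero] at hsz
  unfold lapProd
  linarith


/-- A positive bounded function, subharmonic for `|z|` large and decaying in `z`
uniformly in `y`, decays like `|z|^{2-K}` (`K = N - M ≥ 3`). -/
theorem stmt_11 (M K : ℕ) (hK : 3 ≤ K)
    (u : EuclideanSpace ℝ (Fin M) × EuclideanSpace ℝ (Fin K) → ℝ)
    (hu : ContDiff ℝ 2 u)
    (hpos : ∀ x, 0 < u x)
    (hbdd : ∃ B : ℝ, ∀ x, u x ≤ B)
    (r : ℝ) (hr : 0 < r)
    (hsub : ∀ x, r ≤ ‖x.2‖ → 0 ≤ lapProd u x)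
    (hdecay : ∀ ε : ℝ, 0 < ε → ∃ R : ℝ, ∀ x : EuclideanSpace ℝ (Fin M) × EuclideanSpace ℝ (Fin K),
      R ≤ ‖x.2‖ → u x < ε) :
    ∃ C R : ℝ, 0 < C ∧ 0 < R ∧
      ∀ x : EuclideanSpace ℝ (Fin M) × EuclideanSpace ℝ (Fin K),
        R ≤ ‖x.2‖ → u x ≤ C * ‖x.2‖ ^ ((2:ℝ) - K) := by
  classical
  obtain ⟨B0, hB0⟩ := hbdd
  set B : ℝ := max B0 1 with hBdef
  have hB : 0 < B := lt_of_lt_of_le one_pos (le_max_right _ _)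
  have hub : ∀ x, u x ≤ B := fun x => (hB0 x).trans (le_max_left _ _)
  set q : ℝ := ((2:ℝ) - K) / 2 with hqdef
  have hq : 2*K*q + 4*q*(q-1) = 0 := by rw [hqdef]; ring
  set lam : ℝ := B * (r^2 : ℝ) ^ (-q) with hlamdef
  have hrsq : (0:ℝ) < r^2 := by positivity
  have hlam : 0 < lam := mul_pos hB (Real.rpow_pos_of_pos hrsq _)
  -- key estimate
  have key : ∀ x : EuclideanSpace ℝ (Fin M) × EuclideanSpace ℝ (Fin K), r ≤ ‖x.2‖ →
      ∀ σ : ℝ, 0 < σ → u x ≤ lam * ((‖x.2‖^2 : ℝ) ^ q) + 3*σ := by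
    intro x0 hx0 σ hσ
    obtain ⟨A0, hA0⟩ := hdecay σ hσ
    set A : ℝ := max A0 (max (r+1) ‖x0.2‖) with hAdef
    have hAr : r < A := lt_of_lt_of_le (by linarith) ((le_max_left _ _).trans (le_max_right _ _))
    have hA0A : A0 ≤ A := le_max_left _ _
    have hAx0 : ‖x0.2‖ ≤ A := (le_max_right _ _).trans (le_max_right _ _)
    have hApos : 0 < A := lt_trans hr hAr
    set eta : ℝ := σ / A^2 with hetadef
    have heta : 0 < eta := div_pos hσ (by positivity)
    have hetaA : eta * A^2 = σ := by
      rw [hetadef]; field_simp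
    set eps : ℝ := min (K*eta/(M+1)) (σ/(‖x0.1‖^2+1)) with hepsdef
    have hKpos : (0:ℝ) < K := by
      have : (3:ℝ) ≤ K := by exact_mod_cast hK
      linarith
    have heps : 0 < eps := lt_min (by positivity) (by positivity)
    have hMe : (M:ℝ) * eps < K * eta := by
      have h1 : eps ≤ K*eta/(M+1) := min_le_left _ _
      have hM1 : (0:ℝ) < M + 1 := by positivity
      have h2 : (M:ℝ) * eps ≤ (M:ℝ) * (K*eta/(M+1)) :=
        mul_le_mul_of_nonneg_left h1 (Nat.cast_nonneg M)
      have h3 : (M:ℝ) * (K*eta/(M+1)) < K * eta := by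
        rw [← mul_div_assoc, div_lt_iff₀ hM1]
        nlinarith [mul_pos hKpos heta]
      linarith
    have hepsx0 : eps * ‖x0.1‖^2 ≤ σ := by
      have h1 : eps ≤ σ/(‖x0.1‖^2+1) := min_le_right _ _
      have h2 : eps * ‖x0.1‖^2 ≤ σ/(‖x0.1‖^2+1) * ‖x0.1‖^2 :=
        mul_le_mul_of_nonneg_right h1 (by positivity)
      have h3 : σ/(‖x0.1‖^2+1) * ‖x0.1‖^2 ≤ σ := by
        rw [div_mul_eq_mul_div, div_le_iff₀ (by positivity)]
        nlinarith [sq_nonneg ‖x0.1‖]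
      linarith
    set w : EuclideanSpace ℝ (Fin M) × EuclideanSpace ℝ (Fin K) → ℝ :=
      wfun q lam (2*σ) eps eta u with hwdef
    set S : Set (EuclideanSpace ℝ (Fin M) × EuclideanSpace ℝ (Fin K)) :=
      {x | r ≤ ‖x.2‖ ∧ ‖x.2‖ ≤ A} with hSdef
    -- boundary estimates
    have hlamr : lam * ((r^2 : ℝ) ^ q) = B := by
      rw [hlamdef, mul_assoc, ← Real.rpow_add hrsq]
      simp
    have hbound : ∀ x ∈ S, ‖x.2‖ = r ∨ ‖x.2‖ = A → w x ≤ 0 := by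
      intro x hxS hcase
      have hrpow_nonneg : 0 ≤ lam * ((‖x.2‖^2 : ℝ) ^ q) := by positivity
      have hetaz : eta * ‖x.2‖^2 ≤ σ := by
        have h1 : ‖x.2‖^2 ≤ A^2 := pow_le_pow_left₀ (norm_nonneg _) hxS.2 2
        calc eta * ‖x.2‖^2 ≤ eta * A^2 := mul_le_mul_of_nonneg_left h1 heta.le
          _ = σ := hetaA
      rcases hcase with h | h
      · have hv : lam * ((‖x.2‖^2 : ℝ) ^ q) = B := by rw [h]; exact hlamr
        have := hub x
        simp only [hwdef, wfun]
        rw [hv]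
        linarith [mul_nonneg heps.le (sq_nonneg ‖x.1‖)]
      · have hdec : u x < σ := hA0 x (by rw [h]; exact hA0A)
        simp only [hwdef, wfun]
        linarith [mul_nonneg heps.le (sq_nonneg ‖x.1‖)]
    -- base point
    have hKne : 0 < K := by omega
    set zb : EuclideanSpace ℝ (Fin K) := EuclideanSpace.single (⟨0, hKne⟩ : Fin K) r with hzbdef
    have hzb : ‖zb‖ = r := by
      simp [hzbdef, Real.norm_eq_abs, abs_of_pos hr]
    set xb : EuclideanSpace ℝ (Fin M) × EuclideanSpace ℝ (Fin K) := (0, zb) with hxbdef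
    have hxbS : xb ∈ S := by
      constructor <;> simp [hxbdef, hzb]
      · exact le_of_lt hAr
    set c0 : ℝ := w xb with hc0def
    -- coercive bound: on S, w x ≤ B + σ - eps * ‖x.1‖^2
    have hcoer : ∀ x ∈ S, w x ≤ B + σ - eps * ‖x.1‖^2 := by
      intro x hxS
      have h1 : 0 ≤ lam * ((‖x.2‖^2 : ℝ) ^ q) := by positivity
      have h2 : eta * ‖x.2‖^2 ≤ σ := by
        have h3 : ‖x.2‖^2 ≤ A^2 := pow_le_pow_left₀ (norm_nonneg _) hxS.2 2
        calc eta * ‖x.2‖^2 ≤ eta * A^2 := mul_le_mul_of_nonneg_left h3 heta.le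
          _ = σ := hetaA
      have h4 := hub x
      simp only [hwdef, wfun]
      linarith [mul_nonneg heps.le (sq_nonneg ‖x.1‖)]
    have hc0B : c0 ≤ B + σ := by
      have := hcoer xb hxbS
      have h0 : ‖xb.1‖ = 0 := by simp [hxbdef]
      rw [h0] at this
      simpa using this
    set D : ℝ := (B + σ - c0)/eps with hDdef
    have hD : 0 ≤ D := div_nonneg (by linarith) heps.le
    set sD : ℝ := Real.sqrt D with hsDdef
    set T : Set (EuclideanSpace ℝ (Fin M) × EuclideanSpace ℝ (Fin K)) :=
      {x | ‖x.1‖ ≤ sD} ∩ S with hTdef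
    have hxbT : xb ∈ T := by
      refine ⟨?_, hxbS⟩
      show ‖xb.1‖ ≤ sD
      have h0 : ‖xb.1‖ = 0 := by simp [hxbdef]
      rw [h0, hsDdef]
      exact Real.sqrt_nonneg D
    -- outside T but in S, w < c0
    have houtside : ∀ x ∈ S, x ∉ T → w x < c0 := by
      intro x hxS hxT
      have hx1 : sD < ‖x.1‖ := by
        by_contra h
        push_neg at h
        exact hxT ⟨h, hxS⟩
      have hx2 : D < ‖x.1‖^2 := by
        have h5 : sD^2 < ‖x.1‖^2 :=
          pow_lt_pow_left₀ hx1 (by rw [hsDdef]; exact Real.sqrt_nonneg D) two_ne_zero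
        rwa [hsDdef, Real.sq_sqrt hD] at h5
      have : B + σ - c0 < eps * ‖x.1‖^2 := by
        rw [hDdef, div_lt_iff₀ heps] at hx2
        linarith [hx2]
      linarith [hcoer x hxS]
    -- compactness of T
    have hTclosed : IsClosed T := by
      have h1 : IsClosed {x : EuclideanSpace ℝ (Fin M) × EuclideanSpace ℝ (Fin K) | ‖x.1‖ ≤ sD} :=
        isClosed_le continuous_fst.norm continuous_const
      have h2 : IsClosed {x : EuclideanSpace ℝ (Fin M) × EuclideanSpace ℝ (Fin K) | r ≤ ‖x.2‖} :=
        isClosed_le continuous_const continuous_snd.norm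
      have h3 : IsClosed {x : EuclideanSpace ℝ (Fin M) × EuclideanSpace ℝ (Fin K) | ‖x.2‖ ≤ A} :=
        isClosed_le continuous_snd.norm continuous_const
      have hS : S = {x : EuclideanSpace ℝ (Fin M) × EuclideanSpace ℝ (Fin K) | r ≤ ‖x.2‖}
          ∩ {x : EuclideanSpace ℝ (Fin M) × EuclideanSpace ℝ (Fin K) | ‖x.2‖ ≤ A} := rfl
      rw [hTdef, hS]
      exact h1.inter (h2.inter h3)
    have hTsub : T ⊆ Metric.closedBall 0 (sD + A) := by
      intro x hx
      rw [Metric.mem_closedBall, dist_zero_right, Prod.norm_def]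
      have h1 : ‖x.1‖ ≤ sD := hx.1
      have h2 : ‖x.2‖ ≤ A := hx.2.2
      have hsD : 0 ≤ sD := by rw [hsDdef]; exact Real.sqrt_nonneg D
      simp only [max_le_iff]
      exact ⟨by linarith [hApos.le], by linarith⟩
    have hTcompact : IsCompact T :=
      IsCompact.of_isClosed_subset (isCompact_closedBall 0 (sD + A)) hTclosed hTsub
    -- continuity of w on T
    have hwcont : ContinuousOn w T := by
      have h1 : ContinuousOn (fun x : EuclideanSpace ℝ (Fin M) × EuclideanSpace ℝ (Fin K) =>
          ((‖x.2‖^2 : ℝ) ^ q)) T := by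
        apply ContinuousOn.rpow_const
        · fun_prop
        · intro x hx
          left
          have := hx.2.1
          have : 0 < ‖x.2‖ := lt_of_lt_of_le hr this
          positivity
      have hc2 : Continuous (fun x : EuclideanSpace ℝ (Fin M) × EuclideanSpace ℝ (Fin K) =>
          eps * ‖x.1‖^2) := by fun_prop
      have hc3 : Continuous (fun x : EuclideanSpace ℝ (Fin M) × EuclideanSpace ℝ (Fin K) =>
          eta * ‖x.2‖^2) := by fun_prop
      have hc1 : ContinuousOn (fun x : EuclideanSpace ℝ (Fin M) × EuclideanSpace ℝ (Fin K) =>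
          lam * ((‖x.2‖^2 : ℝ) ^ q)) T := continuousOn_const.mul h1
      simp only [hwdef, wfun]
      exact ((((hu.continuous.continuousOn.sub hc1).sub continuousOn_const).sub
        hc2.continuousOn).add hc3.continuousOn)
    obtain ⟨xs, hxsT, hxsmax⟩ := hTcompact.exists_isMaxOn ⟨xb, hxbT⟩ hwcont
    -- global max on S
    have hglobal : ∀ x ∈ S, w x ≤ w xs := by
      intro x hxS
      by_cases hxT : x ∈ T
      · exact hxsmax hxT
      · have h1 := houtside x hxS hxT
        have h2 : c0 ≤ w xs := hxsmax hxbT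
        linarith
    -- w xs ≤ 0
    have hwxs : w xs ≤ 0 := by
      have hxsS : xs ∈ S := hxsT.2
      rcases eq_or_lt_of_le hxsS.1 with h | h
      · exact hbound xs hxsS (Or.inl h.symm)
      rcases eq_or_lt_of_le hxsS.2 with h2 | h2
      · exact hbound xs hxsS (Or.inr h2)
      -- interior case: contradiction
      exfalso
      have hopen : IsOpen {x : EuclideanSpace ℝ (Fin M) × EuclideanSpace ℝ (Fin K) |
          r < ‖x.2‖ ∧ ‖x.2‖ < A} := by
        have h1 : IsOpen {x : EuclideanSpace ℝ (Fin M) × EuclideanSpace ℝ (Fin K) | r < ‖x.2‖} :=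
          isOpen_lt continuous_const continuous_snd.norm
        have h2 : IsOpen {x : EuclideanSpace ℝ (Fin M) × EuclideanSpace ℝ (Fin K) | ‖x.2‖ < A} :=
          isOpen_lt continuous_snd.norm continuous_const
        exact h1.inter h2
      have hmem : xs ∈ {x : EuclideanSpace ℝ (Fin M) × EuclideanSpace ℝ (Fin K) |
          r < ‖x.2‖ ∧ ‖x.2‖ < A} := ⟨h, h2⟩
      have hlocmax : IsLocalMax w xs := by
        have hnhds : {x : EuclideanSpace ℝ (Fin M) × EuclideanSpace ℝ (Fin K) |
            r < ‖x.2‖ ∧ ‖x.2‖ < A} ∈ nhds xs := hopen.mem_nhds hmem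
        filter_upwards [hnhds] with x hx
        exact hglobal x ⟨hx.1.le, hx.2.le⟩
      have hxs2 : xs.2 ≠ 0 := by
        intro hcontra
        rw [hcontra] at h
        simp at h
        linarith
      have hii := interior_ineq hu q lam (2*σ) eps eta xs hxs2 hq hlocmax
      have hls := hsub xs hxsS.1
      have he1 : eta * 2 * (K:ℝ) = 2 * ((K:ℝ) * eta) := by ring
      have he2 : eps * 2 * (M:ℝ) = 2 * ((M:ℝ) * eps) := by ring
      rw [he1, he2] at hii
      linarith
    -- conclude: x0 ∈ S
    have hx0S : x0 ∈ S := ⟨hx0, hAx0⟩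
    have hwx0 : w x0 ≤ 0 := le_trans (hglobal x0 hx0S) hwxs
    simp only [hwdef, wfun] at hwx0
    linarith [mul_nonneg heta.le (sq_nonneg ‖x0.2‖), hepsx0]
  -- final conversion
  refine ⟨lam, r, hlam, hr, ?_⟩
  intro x hx
  have h1 : u x ≤ lam * ((‖x.2‖^2 : ℝ) ^ q) := by
    refine le_of_forall_pos_le_add ?_
    intro ε hε
    have := key x hx (ε/3) (by linarith)
    linarith
  have h2 : ((‖x.2‖^2 : ℝ) ^ q) = ‖x.2‖ ^ ((2:ℝ) - K) := by
    have hn : (0:ℝ) ≤ ‖x.2‖ := norm_nonneg _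
    rw [← Real.rpow_natCast ‖x.2‖ 2, ← Real.rpow_mul hn]
    congr 1
    push_cast
    rw [hqdef]
    ring
  rw [← h2]
  exact h1
end

section
/- Let N ≥ 3 and let u ∈ C²(ℝ^N) be positive and bounded with -Δu = f(u), where f is C¹, f(0) = 0, and f'(s) ≤ 0 on (0,ε). If u(x) → 0 as |x| → ∞, then u(x) ≤ C|x|^{2-N} for |x| ≥ M, for suitable constants C, M > 0. -/
open Filter Set

/-- Laplacian on `ℝ^N`. -/
noncomputable def lapE {N : ℕ} (u : EuclideanSpace ℝ (Fin N) → ℝ)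
    (x : EuclideanSpace ℝ (Fin N)) : ℝ :=
  ∑ i : Fin N, dir2 u (EuclideanSpace.single i 1) x

/-- Second derivative test: at a local max, second derivative is ≤ 0. -/
lemma sd_test (φ : ℝ → ℝ) (hφ : ∀ᶠ s in nhds (0:ℝ), DifferentiableAt ℝ φ s)
    (a : ℝ) (ha : HasDerivAt (deriv φ) a 0) (hmax : IsLocalMax φ 0) : a ≤ 0 := by
  by_contra hcon
  push_neg at hcon
  have h0 : deriv φ 0 = 0 := hmax.deriv_eq_zero
  -- slope of deriv φ tends to a > 0
  have hslope := hasDerivAt_iff_tendsto_slope.1 ha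
  have hpos : ∀ᶠ s in nhdsWithin (0:ℝ) (Set.Ioi 0), 0 < deriv φ s := by
    have h1 : ∀ᶠ s in nhdsWithin (0:ℝ) {(0:ℝ)}ᶜ, 0 < slope (deriv φ) 0 s :=
      hslope (Ioi_mem_nhds hcon)
    have h2 : ∀ᶠ s in nhdsWithin (0:ℝ) (Set.Ioi 0), 0 < slope (deriv φ) 0 s :=
      nhdsWithin_mono 0 (fun s hs => ne_of_gt hs) h1
    filter_upwards [h2, self_mem_nhdsWithin] with s hs hs'
    have : slope (deriv φ) 0 s = deriv φ s / s := by
      simp [slope, h0, div_eq_inv_mul]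
    rw [this] at hs
    have hs0 : (0:ℝ) < s := hs'
    rcases div_pos_iff.1 hs with ⟨h,_⟩|⟨_,h⟩
    · exact h
    · linarith
  -- extract a common δ
  rw [eventually_nhdsWithin_iff] at hpos
  obtain ⟨δ₁, hδ₁, hd1⟩ := Metric.eventually_nhds_iff.1 hpos
  obtain ⟨δ₂, hδ₂, hd2⟩ := Metric.eventually_nhds_iff.1 hφ
  obtain ⟨δ₃, hδ₃, hd3⟩ := Metric.eventually_nhds_iff.1 (hmax : ∀ᶠ s in nhds 0, φ s ≤ φ 0)
  set δ := min δ₁ (min δ₂ δ₃) / 2 with hδdef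
  have hδ : 0 < δ := by positivity
  have hδlt : ∀ s ∈ Set.Icc (0:ℝ) δ, dist s 0 < min δ₁ (min δ₂ δ₃) := by
    intro s hs
    rw [Real.dist_eq, sub_zero, abs_of_nonneg hs.1]
    have := hs.2
    simp only [hδdef] at this ⊢
    linarith [lt_min hδ₁ (lt_min hδ₂ hδ₃)]
  have hmono : StrictMonoOn φ (Set.Icc 0 δ) := by
    apply strictMonoOn_of_deriv_pos (convex_Icc 0 δ)
    · intro s hs
      exact ((hd2 (lt_of_lt_of_le (hδlt s hs) (le_trans (min_le_right _ _) (min_le_left _ _)))).continuousAt).continuousWithinAt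
    · intro s hs
      rw [interior_Icc] at hs
      have h1 : dist s 0 < δ₁ := lt_of_lt_of_le (hδlt s ⟨le_of_lt hs.1, le_of_lt hs.2⟩) (min_le_left _ _)
      exact hd1 h1 hs.1
  have : φ 0 < φ δ := hmono ⟨le_refl 0, le_of_lt hδ⟩ ⟨le_of_lt hδ, le_refl δ⟩ hδ
  have hδ3' : dist δ 0 < δ₃ :=
    lt_of_lt_of_le (hδlt δ ⟨le_of_lt hδ, le_refl δ⟩) (le_trans (min_le_right _ _) (min_le_right _ _))
  exact absurd (hd3 hδ3') (not_le.2 this)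


lemma radial_hasDeriv {N : ℕ} (p : ℝ) (x e : EuclideanSpace ℝ (Fin N))
    (hx : x ≠ 0) (he : ‖e‖ = 1) :
    ∃ ψ : ℝ → ℝ,
      (∀ᶠ s in nhds (0:ℝ), HasDerivAt (fun t => (‖x + t • e‖^2 : ℝ) ^ p) (ψ s) s) ∧
      HasDerivAt ψ
        (p*(p-1)*((‖x‖^2:ℝ))^(p-2)*(2*(inner ℝ x e : ℝ))^2 + 2*p*((‖x‖^2:ℝ))^(p-1)) 0 := by
  set c : ℝ := inner ℝ x e with hc
  set q : ℝ → ℝ := fun s => ‖x‖^2 + 2*c*s + s^2 with hqdef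
  have hqeq : ∀ s : ℝ, (‖x + s • e‖^2 : ℝ) = q s := by
    intro s
    rw [norm_add_sq_real, real_inner_smul_right, norm_smul]
    simp only [he, mul_one, Real.norm_eq_abs, sq_abs, hqdef]
    rw [← hc]
    ring
  have hq0 : (0:ℝ) < q 0 := by
    have : q 0 = ‖x‖^2 := by simp [hqdef]
    rw [this]
    have hxn : ‖x‖ ≠ 0 := norm_ne_zero_iff.2 hx
    positivity
  have hqcont : ContinuousAt q 0 := by fun_prop
  have hqpos : ∀ᶠ s in nhds (0:ℝ), 0 < q s := hqcont.eventually (eventually_gt_nhds hq0)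
  have hqd : ∀ s : ℝ, HasDerivAt q (2*c + 2*s) s := by
    intro s
    have h1 : HasDerivAt (fun t : ℝ => ‖x‖^2 + 2*c*t + t^2) (0 + 2*c*1 + 2*s) s := by
      exact ((hasDerivAt_const s _).add ((hasDerivAt_id s).const_mul (2*c))).add
        (by simpa using hasDerivAt_pow 2 s)
    convert h1 using 1
    ring
  refine ⟨fun s => p * q s ^ (p - 1) * (2*c + 2*s), ?_, ?_⟩
  · filter_upwards [hqpos] with s hs
    have h2 : HasDerivAt (fun t => q t ^ p) (p * q s ^ (p-1) * (2*c + 2*s)) s :=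
      (Real.hasDerivAt_rpow_const (Or.inl (ne_of_gt hs))).comp s (hqd s)
    have : (fun t => (‖x + t • e‖^2 : ℝ) ^ p) = fun t => q t ^ p := by
      funext t; rw [hqeq]
    rw [this]
    exact h2
  · have hA : HasDerivAt (fun s => q s ^ (p-1)) ((p-1) * q 0 ^ (p-1-1) * (2*c + 2*0)) 0 :=
      (Real.hasDerivAt_rpow_const (Or.inl (ne_of_gt hq0))).comp 0 (hqd 0)
    have hB : HasDerivAt (fun s : ℝ => 2*c + 2*s) 2 0 := by
      simpa using ((hasDerivAt_id (0:ℝ)).const_mul 2).const_add (2*c)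
    have hAB := hA.mul hB
    have h3 := hAB.const_mul p
    have hq0eq : q 0 = ‖x‖^2 := by simp [hqdef]
    have hexp : p - 1 - 1 = p - 2 := by ring
    rw [hq0eq, hexp] at h3
    convert h3 using 1
    · rfl
    · rfl
    · funext s; simp only [Pi.mul_apply]; ring
    · ring

lemma dir2_radial {N : ℕ} (p : ℝ) (x e : EuclideanSpace ℝ (Fin N))
    (hx : x ≠ 0) (he : ‖e‖ = 1) :
    dir2 (fun y => (‖y‖^2 : ℝ) ^ p) e x
      = p*(p-1)*((‖x‖^2:ℝ))^(p-2)*(2*(inner ℝ x e : ℝ))^2 + 2*p*((‖x‖^2:ℝ))^(p-1) := by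
  obtain ⟨ψ, hev, hψ⟩ := radial_hasDeriv p x e hx he
  unfold dir2
  have h1 : deriv (fun s : ℝ => (‖x + s • e‖^2 : ℝ) ^ p) =ᶠ[nhds (0:ℝ)] ψ :=
    hev.mono fun s hs => hs.deriv
  rw [Filter.EventuallyEq.deriv_eq h1]
  exact hψ.deriv

lemma sum_sq_eq {N : ℕ} (x : EuclideanSpace ℝ (Fin N)) : ∑ i, (x i)^2 = ‖x‖^2 := by
  rw [EuclideanSpace.norm_eq, Real.sq_sqrt (by positivity)]
  simp [sq_abs]

lemma lapE_radial {N : ℕ} (p : ℝ) (x : EuclideanSpace ℝ (Fin N)) (hx : x ≠ 0) :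
    lapE (fun y => (‖y‖^2 : ℝ) ^ p) x = (2*p*(2*p - 2 + N)) * ((‖x‖^2:ℝ))^(p-1) := by
  unfold lapE
  have hxn : (0:ℝ) < ‖x‖^2 := by
    have : ‖x‖ ≠ 0 := norm_ne_zero_iff.2 hx
    positivity
  have key : ∀ i : Fin N, dir2 (fun y => (‖y‖^2 : ℝ) ^ p) (EuclideanSpace.single i 1) x
      = p*(p-1)*((‖x‖^2:ℝ))^(p-2)*4*(x i)^2 + 2*p*((‖x‖^2:ℝ))^(p-1) := by
    intro i
    rw [dir2_radial p x _ hx (by simp)]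
    have : (inner ℝ x (EuclideanSpace.single i (1:ℝ)) : ℝ) = x i := by
      rw [EuclideanSpace.inner_single_right]
      simp
    rw [this]
    ring
  rw [Finset.sum_congr rfl (fun i _ => key i), Finset.sum_add_distrib]
  rw [← Finset.mul_sum, Finset.sum_const]
  rw [sum_sq_eq]
  have hpow : ((‖x‖^2:ℝ))^(p-2) * ‖x‖^2 = ((‖x‖^2:ℝ))^(p-1) := by
    nth_rewrite 2 [← Real.rpow_one (‖x‖^2:ℝ)]
    rw [← Real.rpow_add hxn]
    congr 1
    ring
  simp only [Finset.card_univ, Fintype.card_fin, nsmul_eq_mul]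
  linear_combination (4*p*(p-1)) * hpow

lemma radial_tendsto {N : ℕ} (p : ℝ) (hp : p < 0) :
    Tendsto (fun y : EuclideanSpace ℝ (Fin N) => (‖y‖^2 : ℝ) ^ p)
      (cocompact (EuclideanSpace ℝ (Fin N))) (nhds 0) := by
  have h1 : Tendsto (fun t : ℝ => (t^2 : ℝ) ^ p) atTop (nhds 0) := by
    have h2 : Tendsto (fun t : ℝ => t ^ (2*p)) atTop (nhds 0) := by
      have := tendsto_rpow_neg_atTop (y := -(2*p)) (by linarith)
      simpa using this
    apply h2.congr'
    filter_upwards [eventually_ge_atTop (1:ℝ)] with t ht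
    rw [← Real.rpow_natCast t 2, ← Real.rpow_mul (by linarith)]
    norm_num [mul_comm]
  exact h1.comp tendsto_norm_cocompact_atTop

lemma radial_contAt {N : ℕ} (p : ℝ) (x : EuclideanSpace ℝ (Fin N)) (hx : x ≠ 0) :
    ContinuousAt (fun y : EuclideanSpace ℝ (Fin N) => (‖y‖^2 : ℝ) ^ p) x := by
  have hxn : (0:ℝ) < ‖x‖^2 := by
    have : ‖x‖ ≠ 0 := norm_ne_zero_iff.2 hx
    positivity
  have h1 : ContinuousAt (fun t : ℝ => t ^ p) (‖x‖^2) :=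
    Real.continuousAt_rpow_const _ _ (Or.inl (ne_of_gt hxn))
  have h2 : ContinuousAt (fun y : EuclideanSpace ℝ (Fin N) => (‖y‖^2 : ℝ)) x := by fun_prop
  exact ContinuousAt.comp (g := fun t : ℝ => t ^ p) (f := fun y : EuclideanSpace ℝ (Fin N) => (‖y‖^2 : ℝ)) h1 h2

lemma dir2_le_at_max {N : ℕ} (u : EuclideanSpace ℝ (Fin N) → ℝ) (hu : ContDiff ℝ 2 u)
    (pg ph C η : ℝ) (z : EuclideanSpace ℝ (Fin N)) (hz : z ≠ 0)
    (e : EuclideanSpace ℝ (Fin N)) (he : ‖e‖ = 1)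
    (hmax : IsLocalMax (fun y => u y - C*((‖y‖^2:ℝ))^pg - η*((‖y‖^2:ℝ))^ph) z) :
    dir2 u e z - C * dir2 (fun y => (‖y‖^2:ℝ)^pg) e z
      - η * dir2 (fun y => (‖y‖^2:ℝ)^ph) e z ≤ 0 := by
  set l : ℝ → EuclideanSpace ℝ (Fin N) := fun s => z + s • e with hl
  have hlc : ContDiff ℝ 2 l := contDiff_const.add (contDiff_id.smul contDiff_const)
  set φu : ℝ → ℝ := fun s => u (l s) with hφu
  have hφuc : ContDiff ℝ 2 φu := hu.comp hlc
  have h21 : (2:WithTop ℕ∞) = (1:WithTop ℕ∞) + 1 := by norm_num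
  rw [h21, contDiff_succ_iff_deriv] at hφuc
  obtain ⟨hudiff, -, hud2⟩ := hφuc
  have hud2' : Differentiable ℝ (deriv φu) := hud2.differentiable one_ne_zero
  obtain ⟨ψg, hevg, hψg⟩ := radial_hasDeriv pg z e hz he
  obtain ⟨ψh, hevh, hψh⟩ := radial_hasDeriv ph z e hz he
  set φv : ℝ → ℝ := fun s => φu s - C*((‖l s‖^2:ℝ))^pg - η*((‖l s‖^2:ℝ))^ph with hφv
  set F : ℝ → ℝ := fun s => deriv φu s - C * ψg s - η * ψh s with hF
  have hev : ∀ᶠ s in nhds (0:ℝ),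
      HasDerivAt φv (F s) s := by
    filter_upwards [hevg, hevh] with s hg hh
    exact (((hudiff s).hasDerivAt.sub (hg.const_mul C)).sub (hh.const_mul η))
  have hdevv : deriv φv =ᶠ[nhds (0:ℝ)] F := hev.mono fun s hs => hs.deriv
  set A : ℝ := deriv (deriv φu) 0
    - C * (pg*(pg-1)*((‖z‖^2:ℝ))^(pg-2)*(2*(inner ℝ z e : ℝ))^2 + 2*pg*((‖z‖^2:ℝ))^(pg-1))
    - η * (ph*(ph-1)*((‖z‖^2:ℝ))^(ph-2)*(2*(inner ℝ z e : ℝ))^2 + 2*ph*((‖z‖^2:ℝ))^(ph-1))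
    with hA
  have hFd : HasDerivAt F A 0 :=
    (((hud2' 0).hasDerivAt).sub (hψg.const_mul C)).sub (hψh.const_mul η)
  have hvd : HasDerivAt (deriv φv) A 0 := hFd.congr_of_eventuallyEq hdevv
  have hvmax : IsLocalMax φv 0 := by
    have hlcont : ContinuousAt l 0 := hlc.continuous.continuousAt
    have hl0 : l 0 = z := by simp [hl]
    have := (hl0 ▸ hmax : IsLocalMax _ (l 0)).comp_continuous hlcont
    exact this
  have hφvdiff : ∀ᶠ s in nhds (0:ℝ), DifferentiableAt ℝ φv s :=
    hev.mono fun s hs => hs.differentiableAt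
  have hAle : A ≤ 0 := sd_test φv hφvdiff A hvd hvmax
  have e1 : dir2 u e z = deriv (deriv φu) 0 := rfl
  rw [e1, dir2_radial pg z e hz he, dir2_radial ph z e hz he]
  exact hAle

lemma lapE_le_at_max {N : ℕ} (u : EuclideanSpace ℝ (Fin N) → ℝ) (hu : ContDiff ℝ 2 u)
    (pg ph C η : ℝ) (z : EuclideanSpace ℝ (Fin N)) (hz : z ≠ 0)
    (hmax : IsLocalMax (fun y => u y - C*((‖y‖^2:ℝ))^pg - η*((‖y‖^2:ℝ))^ph) z) :
    lapE u z - C * lapE (fun y => (‖y‖^2:ℝ)^pg) z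
      - η * lapE (fun y => (‖y‖^2:ℝ)^ph) z ≤ 0 := by
  unfold lapE
  rw [Finset.mul_sum, Finset.mul_sum, ← Finset.sum_sub_distrib, ← Finset.sum_sub_distrib]
  apply Finset.sum_nonpos
  intro i _
  exact dir2_le_at_max u hu pg ph C η z hz _ (by simp) hmax

/-- A positive bounded solution of `-Δu = f(u)` decaying at infinity satisfies
`u(x) ≤ C |x|^{2-N}` for large `|x|`, `N ≥ 3`. -/
theorem stmt_12 (N : ℕ) (hN : 3 ≤ N)
    (f : ℝ → ℝ) (hf : ContDiff ℝ 1 f) (hf0 : f 0 = 0)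
    (ε : ℝ) (hε : 0 < ε) (hmono : ∀ s ∈ Set.Ioo (0:ℝ) ε, deriv f s ≤ 0)
    (u : EuclideanSpace ℝ (Fin N) → ℝ) (hu : ContDiff ℝ 2 u)
    (hpos : ∀ x, 0 < u x)
    (hbdd : ∃ B : ℝ, ∀ x, u x ≤ B)
    (heq : ∀ x, lapE u x = -f (u x))
    (hdecay : Tendsto u (cocompact (EuclideanSpace ℝ (Fin N))) (nhds 0)) :
    ∃ C M : ℝ, 0 < C ∧ 0 < M ∧
      ∀ x : EuclideanSpace ℝ (Fin N), M ≤ ‖x‖ → u x ≤ C * ‖x‖ ^ ((2:ℝ) - N) := by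
  have hNr : (3:ℝ) ≤ (N:ℝ) := by exact_mod_cast hN
  set pg : ℝ := ((2:ℝ) - N)/2 with hpg
  set ph : ℝ := -(1/4 : ℝ) with hph
  have hpgneg : pg < 0 := by rw [hpg]; linarith
  have hphneg : ph < 0 := by rw [hph]; norm_num
  obtain ⟨B, hB⟩ := hbdd
  have hBpos : 0 < B := lt_of_lt_of_le (hpos 0) (hB 0)
  -- f nonpositive on [0, ε]
  have hfanti : AntitoneOn f (Set.Icc 0 ε) := by
    apply antitoneOn_of_deriv_nonpos (convex_Icc 0 ε) (hf.continuous.continuousOn)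
    · exact fun x _ => (hf.differentiable one_ne_zero x).differentiableWithinAt
    · rw [interior_Icc]; exact hmono
  have hfnonpos : ∀ s, 0 ≤ s → s < ε → f s ≤ 0 := by
    intro s hs0 hsε
    have := hfanti (Set.mem_Icc.2 ⟨le_refl 0, le_of_lt hε⟩)
      (Set.mem_Icc.2 ⟨hs0, le_of_lt hsε⟩) hs0
    rwa [hf0] at this
  -- choose M
  have hmem : {x : EuclideanSpace ℝ (Fin N) | u x < ε} ∈ cocompact _ := by
    have := hdecay (Iio_mem_nhds hε)
    simpa [Set.preimage] using this
  obtain ⟨K, hK, hKsub⟩ := mem_cocompact.1 hmem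
  obtain ⟨r, hr⟩ := hK.isBounded.subset_closedBall 0
  set M : ℝ := max r 1 + 1 with hM
  have hMpos : (0:ℝ) < M := by
    have : (1:ℝ) ≤ max r 1 := le_max_right _ _
    linarith
  have hMr : r < M := by
    have : r ≤ max r 1 := le_max_left _ _
    linarith
  have hMsmall : ∀ x : EuclideanSpace ℝ (Fin N), M ≤ ‖x‖ → u x < ε := by
    intro x hx
    apply hKsub
    intro hxK
    have := hr hxK
    rw [Metric.mem_closedBall, dist_zero_right] at this
    linarith
  -- choose C
  set C : ℝ := B * ((M^2:ℝ)) ^ (-pg) with hC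
  have hM2pos : (0:ℝ) < M^2 := by positivity
  have hCpos : 0 < C := by
    apply mul_pos hBpos
    exact Real.rpow_pos_of_pos hM2pos _
  have hCbdry : C * ((M^2:ℝ)) ^ pg = B := by
    rw [hC, mul_assoc, ← Real.rpow_add hM2pos]
    simp
  -- main claim
  have claim : ∀ η : ℝ, 0 < η → ∀ x : EuclideanSpace ℝ (Fin N), M ≤ ‖x‖ →
      u x - C * ((‖x‖^2:ℝ)) ^ pg - η * ((‖x‖^2:ℝ)) ^ ph ≤ 0 := by
    intro η hη
    by_contra hcon
    push_neg at hcon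
    obtain ⟨x₀, hx₀M, hx₀⟩ := hcon
    set v : EuclideanSpace ℝ (Fin N) → ℝ :=
      fun y => u y - C * ((‖y‖^2:ℝ)) ^ pg - η * ((‖y‖^2:ℝ)) ^ ph with hv
    -- boundary: v < 0 on sphere of radius M
    have hbdry : ∀ y : EuclideanSpace ℝ (Fin N), ‖y‖ = M → v y < 0 := by
      intro y hy
      have h1 : u y ≤ B := hB y
      have h2 : C * ((‖y‖^2:ℝ)) ^ pg = B := by rw [hy]; exact hCbdry
      have h3 : 0 < η * ((‖y‖^2:ℝ)) ^ ph := by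
        apply mul_pos hη
        apply Real.rpow_pos_of_pos
        rw [hy]; exact hM2pos
      simp only [hv]
      linarith
    -- v tends to 0 at infinity
    have hvt : Tendsto v (cocompact (EuclideanSpace ℝ (Fin N))) (nhds 0) := by
      have := (hdecay.sub ((radial_tendsto pg hpgneg).const_mul C)).sub
        ((radial_tendsto ph hphneg).const_mul η)
      simpa using this
    have hmem2 : {y : EuclideanSpace ℝ (Fin N) | v y < v x₀} ∈ cocompact _ := by
      have := hvt (Iio_mem_nhds hx₀)
      simpa [Set.preimage] using this
    obtain ⟨K2, hK2, hK2sub⟩ := mem_cocompact.1 hmem2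
    obtain ⟨r2, hr2⟩ := hK2.isBounded.subset_closedBall 0
    set R : ℝ := max r2 ‖x₀‖ + 1 with hR
    have hx₀R : ‖x₀‖ < R := by
      have : ‖x₀‖ ≤ max r2 ‖x₀‖ := le_max_right _ _
      linarith
    have hRfar : ∀ y : EuclideanSpace ℝ (Fin N), R ≤ ‖y‖ → v y < v x₀ := by
      intro y hy
      apply hK2sub
      intro hyK
      have h1 := hr2 hyK
      rw [Metric.mem_closedBall, dist_zero_right] at h1
      have h2 : r2 ≤ max r2 ‖x₀‖ := le_max_left _ _
      linarith
    -- the compact annulus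
    set A : Set (EuclideanSpace ℝ (Fin N)) :=
      Metric.closedBall 0 R ∩ {y | M ≤ ‖y‖} with hA
    have hAc : IsCompact A := by
      apply (isCompact_closedBall 0 R).inter_right
      exact isClosed_le continuous_const continuous_norm
    have hx₀A : x₀ ∈ A := by
      constructor
      · rw [Metric.mem_closedBall, dist_zero_right]; linarith
      · exact hx₀M
    have hvcont : ContinuousOn v A := by
      intro y hyA
      have hyne : y ≠ 0 := by
        intro h
        rw [hA] at hyA
        have := hyA.2
        rw [h] at this
        simp at this
        linarith
      exact (((hu.continuous.continuousAt).sub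
        (((radial_contAt pg y hyne).const_mul C))).sub
        (((radial_contAt ph y hyne).const_mul η))).continuousWithinAt
    obtain ⟨z, hzA, hzmax⟩ := hAc.exists_isMaxOn ⟨x₀, hx₀A⟩ hvcont
    have hvz : 0 < v z := lt_of_lt_of_le hx₀ (hzmax hx₀A)
    have hzM : M < ‖z‖ := by
      have hzA2 : M ≤ ‖z‖ := hzA.2
      rcases lt_or_eq_of_le hzA2 with h | h
      · exact h
      · exact absurd hvz (not_lt.2 (le_of_lt (hbdry z h.symm)))
    have hzR : ‖z‖ < R := by
      by_contra h
      push_neg at h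
      exact absurd (hzmax hx₀A) (not_le.2 (hRfar z h))
    have hzne : z ≠ 0 := by
      intro h
      rw [h] at hzM
      simp at hzM
      linarith
    -- local max
    have hlocmax : IsLocalMax v z := by
      apply hzmax.isLocalMax
      have hopen : IsOpen {y : EuclideanSpace ℝ (Fin N) | M < ‖y‖ ∧ ‖y‖ < R} := by
        apply IsOpen.inter
        · exact isOpen_lt continuous_const continuous_norm
        · exact isOpen_lt continuous_norm continuous_const
      apply mem_nhds_iff.2
      refine ⟨{y | M < ‖y‖ ∧ ‖y‖ < R}, ?_, hopen, ⟨hzM, hzR⟩⟩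
      intro y hy
      exact ⟨by rw [Metric.mem_closedBall, dist_zero_right]; exact le_of_lt hy.2,
        le_of_lt hy.1⟩
    -- contradiction via Laplacian
    have hkey := lapE_le_at_max u hu pg ph C η z hzne hlocmax
    have hlapg : lapE (fun y => (‖y‖^2:ℝ)^pg) z = 0 := by
      rw [lapE_radial pg z hzne]
      have : 2*pg*(2*pg - 2 + N) = 0 := by rw [hpg]; ring
      rw [this, zero_mul]
    have hlaph : η * lapE (fun y => (‖y‖^2:ℝ)^ph) z < 0 := by
      rw [lapE_radial ph z hzne]
      apply mul_neg_of_pos_of_neg hη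
      apply mul_neg_of_neg_of_pos
      · rw [hph]; nlinarith
      · apply Real.rpow_pos_of_pos
        have : ‖z‖ ≠ 0 := norm_ne_zero_iff.2 hzne
        positivity
    have hlapu : 0 ≤ lapE u z := by
      rw [heq z]
      have h1 : u z < ε := hMsmall z (le_of_lt hzM)
      have h2 : f (u z) ≤ 0 := hfnonpos (u z) (le_of_lt (hpos z)) h1
      linarith
    rw [hlapg, mul_zero, sub_zero] at hkey
    linarith
  -- conclude
  refine ⟨C, M, hCpos, hMpos, ?_⟩
  intro x hx
  have hxne : x ≠ 0 := by
    intro h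
    rw [h] at hx
    simp at hx
    linarith
  have hx2pos : (0:ℝ) < ‖x‖^2 := by
    have : ‖x‖ ≠ 0 := norm_ne_zero_iff.2 hxne
    positivity
  have hhx : (0:ℝ) < ((‖x‖^2:ℝ)) ^ ph := Real.rpow_pos_of_pos hx2pos _
  have hle : u x ≤ C * ((‖x‖^2:ℝ)) ^ pg := by
    by_contra h
    push_neg at h
    set d : ℝ := u x - C * ((‖x‖^2:ℝ)) ^ pg with hd
    have hdpos : 0 < d := by rw [hd]; linarith
    have := claim (d / (2 * ((‖x‖^2:ℝ)) ^ ph)) (by positivity) x hx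
    rw [← hd] at this
    have heval : d / (2 * ((‖x‖^2:ℝ)) ^ ph) * ((‖x‖^2:ℝ)) ^ ph = d / 2 := by
      field_simp
    rw [heval] at this
    linarith
  calc u x ≤ C * ((‖x‖^2:ℝ)) ^ pg := hle
    _ = C * ‖x‖ ^ ((2:ℝ) - N) := by
        congr 1
        rw [← Real.rpow_natCast ‖x‖ 2, ← Real.rpow_mul (norm_nonneg x)]
        congr 1
        rw [hpg]
        push_cast
        ring
end
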